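/- arXiv:1705.05317 — 4 statements merged into one kernel-verified Lean document; each statement's English description precedes it below -/
import Mathlib

section
/- Let G be a star K_{1,r} with r ≥ 4, and let k ≥ 2 be an integer. Then cfc(L^{k+1}(G)) = cfc(L^k(G)) = 2. -/
open SimpleGraph

universe u

/-- An edge coloring makes `G` conflict-free connected: every two distinct vertices are
joined by a path on which some color appears on exactly one edge. -/
def IsCFCColoring {V : Type u} (G : SimpleGraph V) (c : Sym2 V → ℕ) : Prop :=
  ∀ u v : V, u ≠ v → ∃ p : G.Walk u v, p.IsPath ∧
    ∃ color : ℕ, (p.edges.map c).count color = 1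

/-- The conflict-free connection number: the least number of colors in a
conflict-free connection coloring. -/
noncomputable def cfcNum {V : Type u} (G : SimpleGraph V) : ℕ :=
  sInf {n : ℕ | ∃ c : Sym2 V → ℕ, (∀ e ∈ G.edgeSet, c e < n) ∧ IsCFCColoring G c}

/-- The line graph of `G`. -/
def lineG {V : Type u} (G : SimpleGraph V) : SimpleGraph G.edgeSet where
  Adj e f := e ≠ f ∧ ∃ v : V, v ∈ (e : Sym2 V) ∧ v ∈ (f : Sym2 V)
  symm := ⟨by rintro e f ⟨h, v, hv, hw⟩; exact ⟨h.symm, v, hw, hv⟩⟩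
  loopless := ⟨by rintro e ⟨h, _⟩; exact h rfl⟩

/-- The `k`-iterated line graph, as a bundled pair (vertex type, graph). -/
def iterLine {V : Type u} (G : SimpleGraph V) : ℕ → (W : Type u) × SimpleGraph W
  | 0 => ⟨V, G⟩
  | n + 1 => ⟨(iterLine G n).2.edgeSet, lineG (iterLine G n).2⟩

/-- The subgraph of `G` induced by the set of cut-edges (bridges) of `G`. -/
def cutG {V : Type u} (G : SimpleGraph V) : SimpleGraph V :=
  SimpleGraph.fromEdgeSet {e | G.IsBridge e}

/-- `h(G)`: the maximum of `cfcNum(K)` over connected components `K` of `C(G)`. -/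
noncomputable def hG {V : Type u} (G : SimpleGraph V) : ℕ :=
  sSup (Set.range fun K : (cutG G).ConnectedComponent => cfcNum ((cutG G).induce K.supp))

/-- `G` is claw-free: no induced `K_{1,3}`. -/
def ClawFree {V : Type u} (G : SimpleGraph V) : Prop :=
  ∀ v a b c : V, G.Adj v a → G.Adj v b → G.Adj v c →
    a ≠ b → a ≠ c → b ≠ c → ¬G.Adj a b → ¬G.Adj a c → ¬G.Adj b c → False

/-- `G` has no cut vertex: deleting any vertex leaves a connected graph. -/
def NoCutVertex {V : Type u} (G : SimpleGraph V) : Prop :=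
  ∀ v : V, (G.induce {w | w ≠ v}).Connected

/-- `B` is a block of `G`: a maximal vertex set inducing a connected subgraph
without cut vertices. -/
def IsBlock {V : Type u} (G : SimpleGraph V) (B : Set V) : Prop :=
  (G.induce B).Connected ∧ NoCutVertex (G.induce B) ∧
    ∀ B' : Set V, B ⊆ B' → (G.induce B').Connected → NoCutVertex (G.induce B') → B' = B

/-- Every component of `C(G)` is a cut-path of `G`: `C(G)` is a linear forest
(acyclic with maximum degree at most 2) and every internal vertex (degree-2 vertex
of `C(G)`) has degree 2 in `G`. -/
def CutPathCondition {V : Type u} (G : SimpleGraph V) : Prop :=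
  (cutG G).IsAcyclic ∧ (∀ v : V, ((cutG G).neighborSet v).ncard ≤ 2) ∧
    ∀ v : V, ((cutG G).neighborSet v).ncard = 2 → (G.neighborSet v).ncard = 2

namespace CFCAux

/-- descending index list: `[a, a-1, ..., a-d]` -/
def descFT : ℕ → ℕ → List ℕ
  | 0, a => [a]
  | d+1, a => a :: descFT d (a-1)

lemma descFT_ne_nil (d a : ℕ) : descFT d a ≠ [] := by cases d <;> simp [descFT]

lemma descFT_head? (d a : ℕ) : (descFT d a).head? = some a := by cases d <;> simp [descFT]

lemma descFT_getLast? (d a : ℕ) : (descFT d a).getLast? = some (a - d) := by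
  induction d generalizing a with
  | zero => simp [descFT]
  | succ d ih =>
      show (List.getLast? (a :: descFT d (a-1))) = _
      have h := descFT_ne_nil d (a-1)
      rcases hx : descFT d (a-1) with _ | ⟨b, t⟩
      · exact absurd hx h
      · rw [List.getLast?_cons_cons]
        rw [← hx, ih]
        congr 1
        omega

lemma descFT_mem : ∀ {d a t : ℕ}, t ∈ descFT d a → a - d ≤ t ∧ t ≤ a := by
  intro d
  induction d with
  | zero => intro a t h; simp [descFT] at h; omega
  | succ d ih =>
      intro a t h
      rw [descFT, List.mem_cons] at h
      rcases h with h | h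
      · omega
      · have := ih h; omega

lemma descFT_nodup (d a : ℕ) (h : d ≤ a) : (descFT d a).Nodup := by
  induction d generalizing a with
  | zero => simp [descFT]
  | succ d ih =>
      rw [descFT, List.nodup_cons]
      refine ⟨fun hmem => ?_, ih (a-1) (by omega)⟩
      have := descFT_mem hmem; omega

lemma descFT_chain' {R : ℕ → ℕ → Prop} (d a : ℕ) (hd : d ≤ a)
    (h : ∀ t, a - d ≤ t → t < a → R (t+1) t) : List.Chain' R (descFT d a) := by
  induction d generalizing a with
  | zero => exact List.isChain_singleton _
  | succ d ih =>
      rw [descFT, List.Chain', List.isChain_cons]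
      constructor
      · intro y hy
        rw [descFT_head?] at hy
        cases hy
        have := h (a-1) (by omega) (by omega)
        have ha : a - 1 + 1 = a := by omega
        rwa [ha] at this
      · exact ih (a-1) (by omega) (fun t h1 h2 => h t (by omega) (by omega))

section Walks

variable {V : Type u} {G : SimpleGraph V}

/-- the consecutive-pair edges of a vertex list -/
def sedges : List V → List (Sym2 V)
  | [] => []
  | [_] => []
  | a :: b :: t => s(a, b) :: sedges (b :: t)

lemma sedges_append_mem : ∀ (A : List V) {B : List V} {x y : V},
    x ∈ A.getLast? → y ∈ B.head? → s(x, y) ∈ sedges (A ++ B)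
  | [], B, x, y, hA, hB => by simp at hA
  | [a], B, x, y, hA, hB => by
      simp at hA
      rcases B with _ | ⟨b, B'⟩
      · simp at hB
      · simp at hB
        subst hA; subst hB
        show _ ∈ s(a, b) :: sedges (b :: B')
        exact List.mem_cons_self
  | a :: a' :: A', B, x, y, hA, hB => by
      rw [List.getLast?_cons_cons] at hA
      show _ ∈ s(a, a') :: sedges ((a' :: A') ++ B)
      exact List.mem_cons_of_mem _ (sedges_append_mem (a' :: A') hA hB)

/-- Build a walk from a chained vertex list. -/
def walkOf (G : SimpleGraph V) :
    (l : List V) → l.Chain' G.Adj → (h : l ≠ []) → G.Walk (l.head h) (l.getLast h)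
  | [], _, h => absurd rfl h
  | [a], _, _ => SimpleGraph.Walk.nil
  | a :: b :: t, hc, _ =>
      (SimpleGraph.Walk.cons (List.isChain_cons_cons.1 hc).1
        (walkOf G (b :: t) (List.isChain_cons_cons.1 hc).2 (List.cons_ne_nil _ _))).copy
        rfl (List.getLast_cons (List.cons_ne_nil _ _)).symm

lemma walkOf_support : ∀ (l : List V) (hc : l.Chain' G.Adj) (h : l ≠ []),
    (walkOf G l hc h).support = l
  | [], _, h => absurd rfl h
  | [a], _, _ => rfl
  | a :: b :: t, hc, _ => by
      show ((SimpleGraph.Walk.cons _ _).copy _ _).support = _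
      exact (SimpleGraph.Walk.support_copy _ _ _).trans
        (congrArg (List.cons a) (walkOf_support (b :: t) _ _))

lemma walkOf_edges : ∀ (l : List V) (hc : l.Chain' G.Adj) (h : l ≠ []),
    (walkOf G l hc h).edges = sedges l
  | [], _, h => absurd rfl h
  | [a], _, _ => rfl
  | a :: b :: t, hc, _ => by
      show ((SimpleGraph.Walk.cons _ _).copy _ _).edges = _
      exact (SimpleGraph.Walk.edges_copy _ _ _).trans
        (congrArg (List.cons s(a, b)) (walkOf_edges (b :: t) _ _))

open Classical in
lemma count_map_ite (E : List (Sym2 V)) (sp : Sym2 V) :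
    (E.map (fun e => if e = sp then 1 else 0)).count 1 = E.count sp := by
  induction E with
  | nil => rfl
  | cons e E ih =>
      rw [List.map_cons, List.count_cons, List.count_cons, ih]
      by_cases h : e = sp <;> simp [h]

lemma map_val_pmap_mk {α : Type u_2} {p : α → Prop} :
    ∀ (l : List α) (H : ∀ a ∈ l, p a),
      (l.pmap (fun a h => (⟨a, h⟩ : Subtype p)) H).map Subtype.val = l := by
  intro l
  induction l with
  | nil => intro _; rfl
  | cons a t ih => intro H; simp only [List.pmap, List.map_cons, ih]

lemma chain'_and_ne {α : Type u_2} {R : α → α → Prop} :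
    ∀ {l : List α}, l.Nodup → l.Chain' R → l.Chain' (fun a b => a ≠ b ∧ R a b) := by
  intro l
  induction l with
  | nil => intro _ _; exact List.isChain_nil
  | cons a t ih =>
      intro hnd hc
      rw [List.Chain', List.isChain_cons] at hc ⊢
      obtain ⟨h1, h2⟩ := hc
      rw [List.nodup_cons] at hnd
      exact ⟨fun y hy => ⟨fun hEq => hnd.1 (hEq ▸ List.mem_of_mem_head? hy), h1 y hy⟩,
        ih hnd.2 h2⟩

lemma chain'_pmap {α : Type u_2} {β : Type u_3} {p : α → Prop} {R : α → α → Prop}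
    {S : β → β → Prop} (f : ∀ a, p a → β)
    (hf : ∀ a ha b hb, R a b → S (f a ha) (f b hb)) :
    ∀ (l : List α) (H : ∀ a ∈ l, p a), l.Chain' R → (l.pmap f H).Chain' S
  | [], _, _ => List.isChain_nil
  | [a], _, _ => by exact List.isChain_singleton _
  | a :: b :: t, H, hc => by
      simp only [List.pmap]
      rw [List.Chain', List.isChain_cons_cons]
      refine ⟨hf _ _ _ _ (List.isChain_cons_cons.1 hc).1, ?_⟩
      have h2 := chain'_pmap f hf (b :: t) (fun x hx => H x (List.mem_cons_of_mem a hx))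
        (List.isChain_cons_cons.1 hc).2
      simp only [List.pmap] at h2
      exact h2

end Walks

section HamA

variable {V : Type u}

def IsHamCycleList (G : SimpleGraph V) (l : List V) : Prop :=
  4 ≤ l.length ∧ l.Nodup ∧ (∀ v, v ∈ l) ∧ l.Chain' G.Adj ∧
    ∀ x ∈ l.getLast?, ∀ y ∈ l.head?, G.Adj x y

open Classical in
theorem exists_two_coloring (G : SimpleGraph V) (l : List V)
    (h : IsHamCycleList G l) :
    ∃ c : Sym2 V → ℕ, (∀ e ∈ G.edgeSet, c e < 2) ∧ IsCFCColoring G c := by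
  obtain ⟨hlen, hnd, hcov, hch, hwrap⟩ := h
  set n := l.length with hn
  have hne : l ≠ [] := by
    intro h0; rw [h0] at hn; simp [hn] at hlen
  set v0 := l.head hne with hv0
  set f : ℕ → V := fun t => l.getD t v0 with hfdef
  have hf : ∀ {t : ℕ} (ht : t < n), f t = l.get ⟨t, ht⟩ := by
    intro t ht; exact List.getD_eq_get l v0 ⟨t, ht⟩
  have hfinj : ∀ a b, a < n → b < n → f a = f b → a = b := by
    intro a b ha hb hab
    rw [hf ha, hf hb] at hab
    have := hnd.get_inj_iff.1 hab
    exact congrArg Fin.val this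
  have hadj : ∀ t, t + 1 < n → G.Adj (f t) (f (t+1)) := by
    intro t ht
    have h2 := List.isChain_iff_getElem.1 hch t (by omega)
    rw [hf (by omega : t < n), hf ht]
    exact h2
  have hhead : l.head hne = f 0 := by
    rw [hf (by omega : 0 < n)]
    exact (List.get_mk_zero _).symm
  have hlast : l.getLast hne = f (n-1) := by
    rw [hf (by omega : n - 1 < n)]; exact List.getLast_eq_getElem hne
  have hwrap' : G.Adj (f (n-1)) (f 0) := by
    have h1 := hwrap (l.getLast hne) (by rw [List.getLast?_eq_getLast hne]; rfl)
      (l.head hne) (by rw [List.head?_eq_head hne]; rfl)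
    rwa [hhead, hlast] at h1
  refine ⟨fun e => if e = s(f (n-1), f 0) then 1 else 0, fun e _ => ?_, ?_⟩
  · dsimp only; split <;> omega
  · have key : ∀ i j : ℕ, i < j → j < n →
        ∃ p : G.Walk (f i) (f j), p.IsPath ∧
          ((p.edges.map fun e => if e = s(f (n-1), f 0) then 1 else 0).count 1) = 1 := by
      intro i j hij hj
      have hi : i < n := lt_trans hij hj
      have h4 : 4 ≤ n := hlen
      set A : List ℕ := descFT i i with hA
      set B : List ℕ := descFT (n-1-j) (n-1) with hB
      set I : List ℕ := A ++ B with hI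
      have hImem : ∀ t ∈ I, t < n := by
        intro t ht
        rcases List.mem_append.1 ht with h | h
        · have := descFT_mem h; omega
        · have := descFT_mem h; omega
      have hInd : I.Nodup := by
        rw [hI, List.nodup_append]
        refine ⟨descFT_nodup _ _ le_rfl, descFT_nodup _ _ (by omega), ?_⟩
        intro t htA t' htB htt
        have h1 := descFT_mem htA
        have h2 := descFT_mem htB
        omega
      have hchI : I.Chain' (fun a b => G.Adj (f a) (f b)) := by
        rw [hI, List.Chain', List.isChain_append]
        refine ⟨descFT_chain' _ _ le_rfl (fun t h1 h2 => (hadj t (by omega)).symm),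
          descFT_chain' _ _ (by omega) (fun t h1 h2 => (hadj t (by omega)).symm), ?_⟩
        intro x hx y hy
        rw [hA, descFT_getLast?] at hx
        rw [hB, descFT_head?] at hy
        simp only [Option.mem_def, Option.some.injEq] at hx hy
        obtain rfl := hx
        obtain rfl := hy
        have hx0 : i - i = 0 := by omega
        rw [hx0]
        exact hwrap'.symm
      have hIne : I ≠ [] := by
        rw [hI]
        intro hcon
        exact descFT_ne_nil i i (List.append_eq_nil_iff.1 hcon).1
      have hPne : I.map f ≠ [] := by
        simpa [List.map_eq_nil_iff] using hIne
      have hPch : (I.map f).Chain' G.Adj := (List.isChain_map f).2 hchI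
      have hPhead? : (I.map f).head? = some (f i) := by
        rw [List.head?_map, hI, List.head?_append, hA, descFT_head?]
        rfl
      have hPlast? : (I.map f).getLast? = some (f j) := by
        rw [List.getLast?_map, hI, List.getLast?_append, hB, descFT_getLast?]
        have hj' : n - 1 - (n-1-j) = j := by omega
        rw [hj']
        rfl
      have hPh : (I.map f).head hPne = f i := by
        have h2 := List.head?_eq_head (l := I.map f) hPne
        rw [hPhead?] at h2
        exact (Option.some.inj h2.symm)
      have hPl : (I.map f).getLast hPne = f j := by
        have h2 := List.getLast?_eq_getLast hPne
        rw [hPlast?] at h2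
        exact (Option.some.inj h2.symm)
      refine ⟨(walkOf G (I.map f) hPch hPne).copy hPh hPl, ?_, ?_⟩
      · rw [SimpleGraph.Walk.isPath_def, SimpleGraph.Walk.support_copy,
          walkOf_support]
        exact hInd.map_on (fun a ha b hb hab => hfinj a b (hImem a ha) (hImem b hb) hab)
      · rw [SimpleGraph.Walk.edges_copy, walkOf_edges, count_map_ite]
        have hmem : s(f (n-1), f 0) ∈ sedges (I.map f) := by
          have h2 : (s(f 0, f (n-1)) : Sym2 V) ∈ sedges (A.map f ++ B.map f) := by
            apply sedges_append_mem
            · rw [List.getLast?_map, hA, descFT_getLast?]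
              have : i - i = 0 := by omega
              rw [this]; rfl
            · rw [List.head?_map, hB, descFT_head?]; rfl
          rw [← List.map_append, ← hI] at h2
          rwa [Sym2.eq_swap] at h2
        have hnodupE : (sedges (I.map f)).Nodup := by
          have hp : (walkOf G (I.map f) hPch hPne).IsPath := by
            rw [SimpleGraph.Walk.isPath_def, walkOf_support]
            exact hInd.map_on (fun a ha b hb hab => hfinj a b (hImem a ha) (hImem b hb) hab)
          have := hp.edges_nodup
          rwa [walkOf_edges] at this
        have h1 : (sedges (I.map f)).count s(f (n-1), f 0) ≤ 1 :=
          List.nodup_iff_count_le_one.1 hnodupE _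
        have h2 : 0 < (sedges (I.map f)).count s(f (n-1), f 0) :=
          List.count_pos_iff.2 hmem
        omega
    intro u v huv
    obtain ⟨⟨i, hi⟩, hu⟩ := List.mem_iff_get.1 (hcov u)
    obtain ⟨⟨j, hj⟩, hv⟩ := List.mem_iff_get.1 (hcov v)
    have hfu : f i = u := by rw [hf hi]; exact hu
    have hfv : f j = v := by rw [hf hj]; exact hv
    have hij : i ≠ j := by
      rintro rfl
      exact huv (by rw [← hu, ← hv])
    rcases lt_or_gt_of_ne hij with h' | h'
    · obtain ⟨p, hp, hcnt⟩ := key i j h' hj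
      exact ⟨p.copy hfu hfv, by simpa using hp, 1,
        by rw [SimpleGraph.Walk.edges_copy]; exact hcnt⟩
    · obtain ⟨p, hp, hcnt⟩ := key j i h' hi
      refine ⟨(p.reverse).copy hfu hfv, by simpa using hp.reverse, 1, ?_⟩
      rw [SimpleGraph.Walk.edges_copy, SimpleGraph.Walk.edges_reverse,
        List.map_reverse, List.count_reverse]
      exact hcnt

end HamA

section Lower

theorem cfcNum_eq_two' {W : Type u} (H : SimpleGraph W)
    (hS : ∃ c : Sym2 W → ℕ, (∀ e ∈ H.edgeSet, c e < 2) ∧ IsCFCColoring H c)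
    (x y : W) (hxy : x ≠ y) (hna : ¬ H.Adj x y) : cfcNum H = 2 := by
  set S : Set ℕ :=
    {n : ℕ | ∃ c : Sym2 W → ℕ, (∀ e ∈ H.edgeSet, c e < n) ∧ IsCFCColoring H c} with hSdef
  have h2 : 2 ∈ S := hS
  have h0 : (0 : ℕ) ∉ S := by
    rintro ⟨c, hc, hcfc⟩
    obtain ⟨p, hp, color, hcount⟩ := hcfc x y hxy
    have hpos : 0 < (p.edges.map c).count color := by omega
    obtain ⟨e, he, rfl⟩ := List.mem_map.1 (List.count_pos_iff.1 hpos)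
    exact absurd (hc e (p.edges_subset_edgeSet he)) (by omega)
  have h1 : (1 : ℕ) ∉ S := by
    rintro ⟨c, hc, hcfc⟩
    obtain ⟨p, hp, color, hcount⟩ := hcfc x y hxy
    have hall : ∀ m ∈ p.edges.map c, m = 0 := by
      intro m hm
      obtain ⟨e, he, rfl⟩ := List.mem_map.1 hm
      have := hc e (p.edges_subset_edgeSet he); omega
    have hc0 : color = 0 := by
      have hpos : 0 < (p.edges.map c).count color := by omega
      exact hall _ (List.count_pos_iff.1 hpos)
    subst hc0
    have hlen1 : (p.edges.map c).length = 1 := by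
      have := List.count_eq_length.2 (fun b hb => (hall b hb).symm)
      omega
    have hplen : p.length = 1 := by
      rw [List.length_map, p.length_edges] at hlen1
      exact hlen1
    cases p with
    | nil => simp at hplen
    | cons h q =>
        rw [SimpleGraph.Walk.length_cons] at hplen
        have hq : q.length = 0 := by omega
        have heq := SimpleGraph.Walk.eq_of_length_eq_zero hq
        exact hna (heq ▸ h)
  have hmem := Nat.sInf_mem (⟨2, h2⟩ : S.Nonempty)
  have hle : sInf S ≤ 2 := Nat.sInf_le h2
  have hne0 : sInf S ≠ 0 := fun h => h0 (h ▸ hmem)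
  have hne1 : sInf S ≠ 1 := fun h => h1 (h ▸ hmem)
  show sInf S = 2
  omega

end Lower

section HamB

open Classical in
theorem lineG_ham {V : Type u} (G : SimpleGraph V) (l : List V)
    (h : IsHamCycleList G l) : ∃ L : List G.edgeSet, IsHamCycleList (lineG G) L := by
  obtain ⟨hlen, hnd, hcov, hch, hwrap⟩ := h
  set n := l.length with hn
  have hne : l ≠ [] := by
    intro h0; rw [h0] at hn; simp [hn] at hlen
  set v0 := l.head hne with hv0
  set f : ℕ → V := fun t => l.getD t v0 with hfdef
  have hf : ∀ {t : ℕ} (ht : t < n), f t = l.get ⟨t, ht⟩ := by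
    intro t ht; exact List.getD_eq_get l v0 ⟨t, ht⟩
  have hfinj : ∀ a b, a < n → b < n → f a = f b → a = b := by
    intro a b ha hb hab
    rw [hf ha, hf hb] at hab
    exact congrArg Fin.val (hnd.get_inj_iff.1 hab)
  have hadj : ∀ t, t + 1 < n → G.Adj (f t) (f (t+1)) := by
    intro t ht
    have h2 := List.isChain_iff_getElem.1 hch t (by omega)
    rw [hf (by omega : t < n), hf ht]
    exact h2
  have hhead : l.head hne = f 0 := by
    rw [hf (by omega : 0 < n)]
    exact (List.get_mk_zero _).symm
  have hlast : l.getLast hne = f (n-1) := by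
    rw [hf (by omega : n - 1 < n)]; exact List.getLast_eq_getElem hne
  have hwrap' : G.Adj (f (n-1)) (f 0) := by
    have h1 := hwrap (l.getLast hne) (by rw [List.getLast?_eq_getLast hne]; rfl)
      (l.head hne) (by rw [List.head?_eq_head hne]; rfl)
    rwa [hhead, hlast] at h1
  have h4 : 4 ≤ n := hlen
  -- the cyclic edges and chord blocks
  set cyc : ℕ → Sym2 V := fun i => if i = n-1 then s(f (n-1), f 0) else s(f i, f (i+1))
    with hcyc
  have cycMem : ∀ i, i < n → cyc i ∈ G.edgeSet := by
    intro i hi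
    by_cases h' : i = n-1
    · simp only [hcyc, h', if_pos rfl]
      exact hwrap'
    · simp only [hcyc, if_neg h']
      exact hadj i (by omega)
  set U : ℕ → ℕ := fun i => if i = 0 then n-2 else n-1 with hU
  set chordIdx : ℕ → List ℕ := fun i =>
    (List.range' (i+2) (U i + 1 - (i+2))).filter (fun b => decide (s(f i, f b) ∈ G.edgeSet))
    with hchordIdx
  set block : ℕ → List (Sym2 V) := fun i =>
    ((chordIdx i).map (fun b => s(f i, f b))) ++ [cyc i] with hblock
  set LL : List (Sym2 V) := (List.range n).flatMap block with hLL
  have chordIdx_mem : ∀ i b, b ∈ chordIdx i →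
      i + 2 ≤ b ∧ b ≤ U i ∧ s(f i, f b) ∈ G.edgeSet := by
    intro i b hb
    rw [hchordIdx] at hb
    obtain ⟨hb1, hb2⟩ := List.mem_filter.1 hb
    obtain ⟨kk, hkk, rfl⟩ := List.mem_range'.1 hb1
    refine ⟨by omega, by omega, of_decide_eq_true hb2⟩
  have chordIdx_mem' : ∀ i b, i + 2 ≤ b → b ≤ U i → s(f i, f b) ∈ G.edgeSet →
      b ∈ chordIdx i := by
    intro i b h1 h2 h3
    rw [hchordIdx]
    refine List.mem_filter.2 ⟨List.mem_range'.2 ⟨b - (i+2), by omega, by omega⟩,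
      decide_eq_true h3⟩
  have blockSub : ∀ i, i < n → ∀ e ∈ block i, e ∈ G.edgeSet := by
    intro i hi e he
    rcases List.mem_append.1 he with he | he
    · obtain ⟨b, hb, rfl⟩ := List.mem_map.1 he
      exact (chordIdx_mem i b hb).2.2
    · rw [List.mem_singleton.1 he]
      exact cycMem i hi
  have blockVert : ∀ i, i < n → ∀ e ∈ block i, f i ∈ e := by
    intro i hi e he
    rcases List.mem_append.1 he with he | he
    · obtain ⟨b, hb, rfl⟩ := List.mem_map.1 he
      exact Sym2.mem_mk_left _ _
    · rw [List.mem_singleton.1 he]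
      by_cases h' : i = n-1
      · subst h'; simp only [hcyc, if_pos rfl]; exact Sym2.mem_mk_left _ _
      · simp only [hcyc, if_neg h']; exact Sym2.mem_mk_left _ _
  have pairEq : ∀ a b c d : ℕ, a < n → b < n → c < n → d < n →
      s(f a, f b) = s(f c, f d) → (a = c ∧ b = d) ∨ (a = d ∧ b = c) := by
    intro a b c d ha hb hc' hd hEq
    rcases Sym2.eq_iff.1 hEq with ⟨h1, h2⟩ | ⟨h1, h2⟩
    · exact Or.inl ⟨hfinj a c ha hc' h1, hfinj b d hb hd h2⟩
    · exact Or.inr ⟨hfinj a d ha hd h1, hfinj b c hb hc' h2⟩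
  have chordNeCyc : ∀ i j b, i < n → j < n → b ∈ chordIdx i → s(f i, f b) ≠ cyc j := by
    intro i j b hi hj hb hEq
    obtain ⟨hb1, hb2, _⟩ := chordIdx_mem i b hb
    have hbn : b < n := by
      rw [hU] at hb2; by_cases h' : i = 0 <;> simp [h'] at hb2 <;> omega
    by_cases h' : j = n-1
    · subst h'
      rw [hcyc] at hEq
      simp only [if_pos rfl] at hEq
      rcases pairEq i b (n-1) 0 hi hbn (by omega) (by omega) hEq with ⟨h1, h2⟩ | ⟨h1, h2⟩
      · omega
      · subst h1
        rw [hU] at hb2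
        simp at hb2
        omega
    · rw [hcyc] at hEq
      simp only [if_neg h'] at hEq
      rcases pairEq i b j (j+1) hi hbn hj (by omega) hEq with ⟨h1, h2⟩ | ⟨h1, h2⟩ <;> omega
  have cycInj : ∀ i j, i < n → j < n → cyc i = cyc j → i = j := by
    intro i j hi hj hEq
    by_contra hij
    by_cases h1 : i = n-1 <;> by_cases h2 : j = n-1
    · omega
    · subst h1
      rw [hcyc] at hEq
      simp only [if_pos rfl, if_neg h2] at hEq
      rcases pairEq (n-1) 0 j (j+1) (by omega) (by omega) hj (by omega) hEq with
        ⟨ha, hb⟩ | ⟨ha, hb⟩ <;> omega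
    · subst h2
      rw [hcyc] at hEq
      simp only [if_pos rfl, if_neg h1] at hEq
      rcases pairEq i (i+1) (n-1) 0 hi (by omega) (by omega) (by omega) hEq with
        ⟨ha, hb⟩ | ⟨ha, hb⟩ <;> omega
    · rw [hcyc] at hEq
      simp only [if_neg h1, if_neg h2] at hEq
      rcases pairEq i (i+1) j (j+1) hi (by omega) hj (by omega) hEq with
        ⟨ha, hb⟩ | ⟨ha, hb⟩ <;> omega
  have blockNodup : ∀ i, i < n → (block i).Nodup := by
    intro i hi
    rw [hblock]
    rw [List.nodup_append]
    refine ⟨?_, List.nodup_singleton _, ?_⟩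
    · apply List.Nodup.map_on
      · intro b hb b' hb' hEq
        obtain ⟨h1, h2, _⟩ := chordIdx_mem i b hb
        obtain ⟨h1', h2', _⟩ := chordIdx_mem i b' hb'
        have hbn : b < n := by
          rw [hU] at h2; by_cases h' : i = 0 <;> simp [h'] at h2 <;> omega
        have hbn' : b' < n := by
          rw [hU] at h2'; by_cases h' : i = 0 <;> simp [h'] at h2' <;> omega
        rcases pairEq i b i b' hi hbn hi hbn' hEq with ⟨_, h⟩ | ⟨hA, hB⟩ <;> omega
      · rw [hchordIdx]
        exact (List.nodup_range').filter _
    · intro e he e' hecyc hee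
      rw [List.mem_singleton] at hecyc
      subst hecyc
      subst hee
      obtain ⟨b, hb, hEq⟩ := List.mem_map.1 he
      exact chordNeCyc i i b hi hi hb hEq
  have blockDisj : ∀ i j, i < n → j < n → i ≠ j → ∀ e ∈ block i, e ∉ block j := by
    intro i j hi hj hij e hei hej
    rcases List.mem_append.1 hei with h1 | h1 <;> rcases List.mem_append.1 hej with h2 | h2
    · obtain ⟨b, hb, rfl⟩ := List.mem_map.1 h1
      obtain ⟨b', hb', hEq⟩ := List.mem_map.1 h2
      obtain ⟨hx1, hx2, _⟩ := chordIdx_mem i b hb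
      obtain ⟨hy1, hy2, _⟩ := chordIdx_mem j b' hb'
      have hbn : b < n := by
        rw [hU] at hx2; by_cases h' : i = 0 <;> simp [h'] at hx2 <;> omega
      have hbn' : b' < n := by
        rw [hU] at hy2; by_cases h' : j = 0 <;> simp [h'] at hy2 <;> omega
      rcases pairEq j b' i b hj hbn' hi hbn hEq with ⟨hA, hB⟩ | ⟨hA, hB⟩ <;> omega
    · obtain ⟨b, hb, rfl⟩ := List.mem_map.1 h1
      rw [List.mem_singleton] at h2
      exact chordNeCyc i j b hi hj hb h2
    · obtain ⟨b, hb, hEq⟩ := List.mem_map.1 h2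
      rw [List.mem_singleton] at h1
      exact chordNeCyc j i b hj hi hb (hEq.trans h1)
    · rw [List.mem_singleton] at h1 h2
      exact hij (cycInj i j hi hj (h1.symm.trans h2))
  -- blocks are nonempty, end with cyc i
  have hblock_ne : ∀ i, block i ≠ [] := by
    intro i hcon
    have hmem : (cyc i) ∈ block i := List.mem_append.2 (Or.inr (List.mem_singleton.2 rfl))
    rw [hcon] at hmem
    exact List.not_mem_nil hmem
  have hblock_last : ∀ i, (block i).getLast? = some (cyc i) := by
    intro i; rw [hblock]; exact List.getLast?_concat
  have blockChain : ∀ i, i < n →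
      (block i).Chain' (fun e e' => ∃ v, v ∈ e ∧ v ∈ e') := by
    intro i hi
    apply List.Pairwise.isChain
    apply List.pairwise_of_forall_mem_list
    intro a ha b hb
    exact ⟨f i, blockVert i hi a ha, blockVert i hi b hb⟩
  have cycVert : ∀ k, 1 ≤ k → k ≤ n - 1 → f k ∈ cyc (k-1) := by
    intro k h1 h2
    have hne1 : k - 1 ≠ n - 1 := by omega
    rw [hcyc]
    simp only [if_neg hne1]
    have hk : k - 1 + 1 = k := by omega
    rw [hk]
    exact Sym2.mem_mk_right _ _
  have aux : ∀ k, k ≤ n →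
      ((List.range k).flatMap block).Chain' (fun e e' => ∃ v, v ∈ e ∧ v ∈ e') ∧
      (1 ≤ k → ((List.range k).flatMap block).getLast? = some (cyc (k-1))) ∧
      k ≤ ((List.range k).flatMap block).length := by
    intro k
    induction k with
    | zero => intro _; exact ⟨by simp [List.Chain'], by omega, by simp⟩
    | succ k ih =>
        intro hk1
        obtain ⟨ih1, ih2, ih3⟩ := ih (by omega)
        rw [List.range_succ, List.flatMap_append, List.flatMap_cons, List.flatMap_nil,
          List.append_nil]
        refine ⟨?_, ?_, ?_⟩
        · rw [List.Chain', List.isChain_append]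
          refine ⟨ih1, blockChain k (by omega), ?_⟩
          intro x hx y hy
          by_cases hk0 : k = 0
          · subst hk0; simp at hx
          · rw [ih2 (by omega)] at hx
            simp only [Option.mem_def, Option.some.injEq] at hx
            subst hx
            exact ⟨f k, cycVert k (by omega) (by omega),
              blockVert k (by omega) y (List.mem_of_mem_head? hy)⟩
        · intro _
          rw [List.getLast?_append, hblock_last k]
          simp
        · rw [List.length_append]
          have : 0 < (block k).length := List.length_pos_iff.2 (hblock_ne k)
          omega
  obtain ⟨hLLchain, hLLlastF, hLLlen⟩ := aux n le_rfl
  have hLLlast : ((List.range n).flatMap block).getLast? = some (cyc (n-1)) :=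
    hLLlastF (by omega)
  have hLLhead : ∀ y ∈ ((List.range n).flatMap block).head?, f 0 ∈ y := by
    intro y hy
    have hdecomp : (List.range n).flatMap block
        = block 0 ++ ((List.range (n-1)).map Nat.succ).flatMap block := by
      rw [show n = (n-1)+1 by omega, List.range_succ_eq_map, List.flatMap_cons]
      simp
    rw [hdecomp, List.head?_append] at hy
    rcases hb0 : (block 0).head? with _ | b0
    · exact absurd (List.head?_eq_none_iff.1 hb0) (hblock_ne 0)
    · rw [hb0] at hy
      simp only [Option.or_some, Option.some_or, Option.mem_def, Option.some.injEq] at hy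
      subst hy
      exact blockVert 0 (by omega) b0 (List.mem_of_mem_head? (by rw [hb0]; rfl))
  have hLLnodup : ((List.range n).flatMap block).Nodup := by
    rw [List.nodup_flatMap]
    refine ⟨fun i hi => blockNodup i (List.mem_range.1 hi), ?_⟩
    refine (List.pairwise_lt_range (n := n)).imp_of_mem ?_
    intro a b ha hb hab
    intro e hea heb
    exact blockDisj a b (List.mem_range.1 ha) (List.mem_range.1 hb) (by omega) e hea heb
  have main : ∀ a b, a < b → b < n → G.Adj (f a) (f b) →
      s(f a, f b) ∈ (List.range n).flatMap block := by
    intro a b hab hbn hadj'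
    by_cases hc1 : b = a + 1
    · subst hc1
      have han : a ≠ n-1 := by omega
      have hEq : s(f a, f (a+1)) = cyc a := by rw [hcyc]; simp [han]
      rw [hEq]
      exact List.mem_flatMap.2 ⟨a, List.mem_range.2 (by omega),
        List.mem_append.2 (Or.inr (List.mem_singleton.2 rfl))⟩
    · by_cases hc2 : a = 0 ∧ b = n-1
      · obtain ⟨rfl, rfl⟩ := hc2
        have hEq : s(f 0, f (n-1)) = cyc (n-1) := by
          rw [hcyc]; simp only [if_pos rfl]; exact Sym2.eq_swap
        rw [hEq]
        exact List.mem_flatMap.2 ⟨n-1, List.mem_range.2 (by omega),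
          List.mem_append.2 (Or.inr (List.mem_singleton.2 rfl))⟩
      · have hbU : b ≤ U a := by
          rw [hU]
          by_cases h' : a = 0
          · have hbne : b ≠ n - 1 := fun hb'' => hc2 ⟨h', hb''⟩
            simp [h']
            omega
          · simp [h']
            omega
        have hchord : b ∈ chordIdx a :=
          chordIdx_mem' a b (by omega) hbU ((SimpleGraph.mem_edgeSet G).2 hadj')
        exact List.mem_flatMap.2 ⟨a, List.mem_range.2 (by omega),
          List.mem_append.2 (Or.inl (List.mem_map.2 ⟨b, hchord, rfl⟩))⟩
  have hLLcov : ∀ e ∈ G.edgeSet, e ∈ (List.range n).flatMap block := by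
    intro e he
    induction e using Sym2.ind with
    | _ x y =>
      have hadjxy : G.Adj x y := (SimpleGraph.mem_edgeSet G).1 he
      obtain ⟨⟨a, ha⟩, hx⟩ := List.mem_iff_get.1 (hcov x)
      obtain ⟨⟨b, hb⟩, hy⟩ := List.mem_iff_get.1 (hcov y)
      have hfa : f a = x := by rw [hf ha]; exact hx
      have hfb : f b = y := by rw [hf hb]; exact hy
      have hab : a ≠ b := by
        intro hEq
        apply hadjxy.ne
        rw [← hfa, ← hfb, hEq]
      rcases lt_or_gt_of_ne hab with h' | h'
      · rw [← hfa, ← hfb]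
        exact main a b h' hb (by rw [hfa, hfb]; exact hadjxy)
      · rw [← hfa, ← hfb, Sym2.eq_swap]
        exact main b a h' ha (by rw [hfa, hfb]; exact hadjxy.symm)
  have hLLsub : ∀ e ∈ (List.range n).flatMap block, e ∈ G.edgeSet := by
    intro e he
    obtain ⟨i, hi, hei⟩ := List.mem_flatMap.1 he
    exact blockSub i (List.mem_range.1 hi) e hei
  refine ⟨((List.range n).flatMap block).pmap (fun e he => (⟨e, he⟩ : G.edgeSet)) hLLsub,
    ?_, ?_, ?_, ?_, ?_⟩
  · rw [List.length_pmap]; omega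
  · have hval : (((List.range n).flatMap block).pmap
        (fun e he => (⟨e, he⟩ : G.edgeSet)) hLLsub).map Subtype.val
        = (List.range n).flatMap block := by
      exact map_val_pmap_mk _ _
    exact List.Nodup.of_map Subtype.val (by rw [hval]; exact hLLnodup)
  · intro E
    exact List.mem_pmap.2 ⟨E.1, hLLcov E.1 E.2, rfl⟩
  · exact chain'_pmap _ (fun a ha b hb hr =>
      ⟨fun hEq => hr.1 (congrArg Subtype.val hEq), hr.2⟩) _ hLLsub
      (chain'_and_ne hLLnodup hLLchain)
  · intro x hx y hy
    have hval : (((List.range n).flatMap block).pmap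
        (fun e he => (⟨e, he⟩ : G.edgeSet)) hLLsub).map Subtype.val
        = (List.range n).flatMap block := by
      exact map_val_pmap_mk _ _
    have hvx : (x : Sym2 V) ∈ ((List.range n).flatMap block).getLast? := by
      rw [← hval, List.getLast?_map, hx]
      rfl
    have hvy : (y : Sym2 V) ∈ ((List.range n).flatMap block).head? := by
      rw [← hval, List.head?_map, hy]
      rfl
    have hx1 : (x : Sym2 V) = cyc (n-1) := by
      rw [hLLlast] at hvx
      exact (Option.some.inj (Option.mem_def.1 hvx)).symm
    have hy0 : f 0 ∈ (y : Sym2 V) := hLLhead _ hvy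
    have hx0 : f 0 ∈ (x : Sym2 V) := by
      rw [hx1, hcyc]
      simp only [if_pos rfl]
      exact Sym2.mem_mk_right _ _
    have hxy : x ≠ y := by
      intro hEq
      have hLLne : (List.range n).flatMap block ≠ [] := by
        intro hcon
        rw [hcon] at hLLlen; simp at hLLlen; omega
      rw [List.getLast?_eq_getLast hLLne] at hvx
      rw [List.head?_eq_head hLLne] at hvy
      have h1 : (x : Sym2 V) = ((List.range n).flatMap block).getLast hLLne :=
        (Option.some.inj hvx).symm
      have h2 : (y : Sym2 V) = ((List.range n).flatMap block).head hLLne :=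
        (Option.some.inj hvy).symm
      have h3 : ((List.range n).flatMap block).getLast hLLne
          = ((List.range n).flatMap block).get
            ⟨((List.range n).flatMap block).length - 1, by omega⟩ :=
        List.getLast_eq_getElem _
      have h4 : ((List.range n).flatMap block).head hLLne
          = ((List.range n).flatMap block).get ⟨0, by omega⟩ :=
        (List.get_mk_zero _).symm
      have h5 : (x : Sym2 V) = (y : Sym2 V) := by rw [hEq]
      rw [h1, h2, h3, h4] at h5
      have h6 := hLLnodup.get_inj_iff.1 h5
      rw [Fin.mk.injEq] at h6
      omega
    exact ⟨hxy, f 0, hx0, hy0⟩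

end HamB

section Base

theorem base_ham {r : ℕ} (hr : 4 ≤ r) :
    ∃ L : List (completeBipartiteGraph (Fin 1) (Fin r)).edgeSet,
      IsHamCycleList (lineG (completeBipartiteGraph (Fin 1) (Fin r))) L := by
  set G := completeBipartiteGraph (Fin 1) (Fin r) with hG
  have hmem : ∀ j : Fin r, s(Sum.inl 0, Sum.inr j) ∈ G.edgeSet := by
    intro j
    rw [SimpleGraph.mem_edgeSet]
    exact Or.inl ⟨rfl, rfl⟩
  set L : List G.edgeSet :=
    (List.finRange r).map (fun j => ⟨s(Sum.inl 0, Sum.inr j), hmem j⟩) with hL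
  have hlen : L.length = r := by simp [hL]
  have hnodupL : L.Nodup := by
    rw [hL]
    apply List.Nodup.map_on
    · intro j _ j' _ hEq
      have hv := congrArg Subtype.val hEq
      rcases Sym2.eq_iff.1 hv with ⟨_, h2⟩ | ⟨h1, _⟩
      · exact Sum.inr.inj h2
      · exact absurd h1 (by simp)
    · exact List.nodup_finRange r
  have hform : ∀ (e : Sym2 (Fin 1 ⊕ Fin r)), e ∈ G.edgeSet →
      ∃ j : Fin r, e = s(Sum.inl 0, Sum.inr j) := by
    intro e he
    induction e using Sym2.ind with
    | _ x y =>
      have hadj := (SimpleGraph.mem_edgeSet G).1 he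
      rcases hadj with ⟨hx, hy⟩ | ⟨hx, hy⟩
      · rcases x with i | j
        · rcases y with i' | j'
          · simp at hy
          · exact ⟨j', by rw [Subsingleton.elim i 0]⟩
        · simp at hx
      · rcases x with i | j
        · simp at hx
        · rcases y with i' | j'
          · exact ⟨j, by rw [Subsingleton.elim i' 0, Sym2.eq_swap]⟩
          · simp at hy
  have hcovL : ∀ E : G.edgeSet, E ∈ L := by
    intro E
    obtain ⟨j, hj⟩ := hform E.1 E.2
    rw [hL]
    exact List.mem_map.2 ⟨j, List.mem_finRange j, Subtype.ext (by rw [hj])⟩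
  have hvert : ∀ E ∈ L, (Sum.inl 0 : Fin 1 ⊕ Fin r) ∈ (E : Sym2 (Fin 1 ⊕ Fin r)) := by
    intro E hE
    obtain ⟨j, hj⟩ := hform E.1 E.2
    rw [hj]
    exact Sym2.mem_mk_left _ _
  refine ⟨L, by omega, hnodupL, hcovL, ?_, ?_⟩
  · rw [List.Chain', List.isChain_iff_getElem]
    intro i hi
    refine ⟨fun hEq => ?_, Sum.inl 0, hvert _ (List.getElem_mem _), hvert _ (List.getElem_mem _)⟩
    have h6 := hnodupL.getElem_inj_iff.1 hEq
    omega
  · intro x hx y hy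
    have hLne : L ≠ [] := by
      intro hcon; rw [hcon] at hlen; simp at hlen; omega
    rw [List.getLast?_eq_getLast hLne] at hx
    rw [List.head?_eq_head hLne] at hy
    have hx' : x = L.getLast hLne := Option.some.inj hx.symm
    have hy' : y = L.head hLne := Option.some.inj hy.symm
    refine ⟨fun hEq => ?_, Sum.inl 0,
      hvert _ (hx' ▸ List.getLast_mem hLne), hvert _ (hy' ▸ List.head_mem hLne)⟩
    rw [hx', hy', List.getLast_eq_getElem, List.head_eq_getElem] at hEq
    have h6 := hnodupL.getElem_inj_iff.1 hEq
    omega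

theorem iter_ham (r : ℕ) (hr : 4 ≤ r) :
    ∀ k : ℕ, ∃ L : List (iterLine (completeBipartiteGraph (Fin 1) (Fin r)) (k+1)).1,
      IsHamCycleList (iterLine (completeBipartiteGraph (Fin 1) (Fin r)) (k+1)).2 L := by
  intro k
  induction k with
  | zero => exact base_ham hr
  | succ k ih =>
      obtain ⟨L, hL⟩ := ih
      exact lineG_ham _ L hL

theorem cfc_level (r : ℕ) (hr : 4 ≤ r) (k : ℕ) (hk : 2 ≤ k) :
    cfcNum (iterLine (completeBipartiteGraph (Fin 1) (Fin r)) k).2 = 2 := by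
  obtain ⟨m, rfl⟩ : ∃ m, k = m + 2 := ⟨k - 2, by omega⟩
  obtain ⟨Lk, hLk⟩ := iter_ham r hr (m+1)
  obtain ⟨Lp, hLp⟩ := iter_ham r hr m
  obtain ⟨hlen, hnd, hcov, hch, hwrap⟩ := hLp
  set H := (iterLine (completeBipartiteGraph (Fin 1) (Fin r)) (m+1)).2 with hH
  have hg : ∀ (i : ℕ) (hi : i + 1 < Lp.length),
      H.Adj (Lp.get ⟨i, by omega⟩) (Lp.get ⟨i+1, hi⟩) := by
    intro i hi
    exact List.isChain_iff_getElem.1 hch i (by omega)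
  have h01 := hg 0 (by omega)
  have h23 := hg 2 (by omega)
  have hgetne : ∀ (i j : ℕ) (hi : i < Lp.length) (hj : j < Lp.length), i ≠ j →
      Lp.get ⟨i, hi⟩ ≠ Lp.get ⟨j, hj⟩ := by
    intro i j hi hj hij hEq
    have h6 := hnd.get_inj_iff.1 hEq
    rw [Fin.mk.injEq] at h6
    exact hij h6
  set x : (lineG H).edgeSet → ℕ := fun _ => 0 with hxdum -- dummy to avoid name clash
  refine cfcNum_eq_two' _ (exists_two_coloring _ Lk hLk)
    (⟨s(Lp.get ⟨0, by omega⟩, Lp.get ⟨1, by omega⟩), H.mem_edgeSet.2 h01⟩)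
    (⟨s(Lp.get ⟨2, by omega⟩, Lp.get ⟨3, by omega⟩), H.mem_edgeSet.2 h23⟩) ?_ ?_
  · intro hEq
    have hv := congrArg Subtype.val hEq
    rcases Sym2.eq_iff.1 hv with ⟨h1, _⟩ | ⟨h1, _⟩
    · exact hgetne 0 2 (by omega) (by omega) (by omega) h1
    · exact hgetne 0 3 (by omega) (by omega) (by omega) h1
  · rintro ⟨-, v, hv1, hv2⟩
    rcases Sym2.mem_iff.1 hv1 with h1 | h1 <;> rcases Sym2.mem_iff.1 hv2 with h2 | h2
    · exact hgetne 0 2 (by omega) (by omega) (by omega) (h1.symm.trans h2)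
    · exact hgetne 0 3 (by omega) (by omega) (by omega) (h1.symm.trans h2)
    · exact hgetne 1 2 (by omega) (by omega) (by omega) (h1.symm.trans h2)
    · exact hgetne 1 3 (by omega) (by omega) (by omega) (h1.symm.trans h2)

end Base

end CFCAux

/-- For a star of order ≥ 5 and k ≥ 2: cfc(L^{k+1}(G)) = cfc(L^k(G)) = 2. -/
theorem stmt_16 (r : ℕ) (hr : 4 ≤ r) (k : ℕ) (hk : 2 ≤ k) :
    cfcNum (iterLine (completeBipartiteGraph (Fin 1) (Fin r)) (k + 1)).2 = 2 ∧
      cfcNum (iterLine (completeBipartiteGraph (Fin 1) (Fin r)) k).2 = 2 := by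
  exact ⟨CFCAux.cfc_level r hr (k+1) (by omega), CFCAux.cfc_level r hr k hk⟩
end

section
/- For the path P_n (n ≥ 2) and any nonnegative integer k: if k < n − 1 then cfc(L^k(P_n)) = ⌈log₂(n − k)⌉. -/
open SimpleGraph

universe u

lemma cfc_mem_of_iso {V W : Type u} {G : SimpleGraph V} {H : SimpleGraph W}
    (φ : G ≃g H) {t : ℕ}
    (h : ∃ c : Sym2 W → ℕ, (∀ e ∈ H.edgeSet, c e < t) ∧ IsCFCColoring H c) :
    ∃ c : Sym2 V → ℕ, (∀ e ∈ G.edgeSet, c e < t) ∧ IsCFCColoring G c := by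
  obtain ⟨c, hc, hcfc⟩ := h
  refine ⟨fun e => c (e.map φ), fun e he => hc _ (φ.map_mem_edgeSet_iff.2 he), ?_⟩
  intro u v huv
  obtain ⟨p, hp, color, hcol⟩ := hcfc (φ u) (φ v) (fun h => huv (φ.injective h))
  refine ⟨(p.map φ.symm.toHom).copy (φ.symm_apply_apply u) (φ.symm_apply_apply v),
    (Walk.isPath_copy _ _ _).2 (Walk.map_isPath_of_injective φ.symm.injective hp), color, ?_⟩
  rw [Walk.edges_copy, Walk.edges_map, List.map_map]
  convert hcol using 2
  apply List.map_congr_left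
  intro e _
  induction e with
  | _ x y => simp

lemma cfcNum_iso {V W : Type u} {G : SimpleGraph V} {H : SimpleGraph W}
    (φ : G ≃g H) : cfcNum G = cfcNum H := by
  unfold cfcNum
  congr 1
  ext t
  exact ⟨fun h => cfc_mem_of_iso φ.symm h, fun h => cfc_mem_of_iso φ h⟩


/-- line graph functor on isos -/
def lineIso {V W : Type u} {G : SimpleGraph V} {H : SimpleGraph W}
    (φ : G ≃g H) : lineG G ≃g lineG H where
  toEquiv := φ.mapEdgeSet
  map_rel_iff' := by
    rintro ⟨e, he⟩ ⟨f, hf⟩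
    show ((φ.mapEdgeSet ⟨e, he⟩ ≠ φ.mapEdgeSet ⟨f, hf⟩) ∧
        ∃ v, v ∈ Sym2.map (⇑φ) e ∧ v ∈ Sym2.map (⇑φ) f)
      ↔ ((⟨e, he⟩ : G.edgeSet) ≠ ⟨f, hf⟩ ∧ ∃ v, v ∈ e ∧ v ∈ f)
    constructor
    · rintro ⟨hne, v, hv, hw⟩
      rw [Sym2.mem_map] at hv hw
      obtain ⟨a, ha, rfl⟩ := hv
      obtain ⟨b, hb, hab⟩ := hw
      refine ⟨fun h => hne (by rw [h]), a, ha, ?_⟩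
      cases φ.injective hab
      exact hb
    · rintro ⟨hne, v, hv, hw⟩
      refine ⟨fun h => hne (φ.mapEdgeSet.injective h), φ v,
        Sym2.mem_map.2 ⟨v, hv, rfl⟩, Sym2.mem_map.2 ⟨v, hw, rfl⟩⟩

lemma pathGraph_edge_iff {m : ℕ} {e : Sym2 (Fin m)} (he : e ∈ (pathGraph m).edgeSet) :
    ∃ (i j : Fin m), i.val + 1 = j.val ∧ e = s(i, j) := by
  induction e with
  | _ a b =>
      rw [mem_edgeSet, pathGraph_adj] at he
      rcases he with h | h
      · exact ⟨a, b, h, rfl⟩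
      · exact ⟨b, a, h, Sym2.eq_swap⟩

/-- edges of the path graph correspond to `Fin (m-1)` -/
def pathEdgeEquiv (m : ℕ) : (pathGraph m).edgeSet ≃ Fin (m - 1) where
  toFun e := ⟨(Sym2.inf e.val).val, by
    obtain ⟨i, j, hij, hej⟩ := pathGraph_edge_iff e.2
    have : (Sym2.inf e.val) = i := by
      rw [hej, Sym2.inf_mk, inf_eq_left]
      exact le_of_lt (by omega : i < j)
    rw [this]
    omega⟩
  invFun i := ⟨s(⟨i.val, by omega⟩, ⟨i.val + 1, by omega⟩), by
    rw [mem_edgeSet, pathGraph_adj]; left; rfl⟩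
  left_inv := by
    rintro ⟨e, he⟩
    obtain ⟨i, j, hij, rfl⟩ := pathGraph_edge_iff he
    have h1 : (Sym2.inf (s(i,j) : Sym2 (Fin m))) = i := by
      rw [Sym2.inf_mk, inf_eq_left]
      exact le_of_lt (by omega : i < j)
    apply Subtype.ext
    have hv : ((s(i,j) : Sym2 (Fin m)).inf).val = i.val := by rw [h1]
    rw [Sym2.eq_iff]
    left
    exact ⟨Fin.ext hv, Fin.ext (show ((s(i,j) : Sym2 (Fin m)).inf).val + 1 = j.val by
      rw [hv]; exact hij)⟩
  right_inv := by
    intro i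
    apply Fin.ext
    simp only [Sym2.inf_mk]
    have : (⟨i.val, by omega⟩ : Fin m) ≤ ⟨i.val + 1, by omega⟩ := by
      simp [Fin.le_def]
    rw [inf_eq_left.2 this]

lemma pathEdgeEquiv_val {m : ℕ} (e : (pathGraph m).edgeSet) (a b : Fin m)
    (hab : a.val + 1 = b.val) (he : e.val = s(a, b)) :
    ((pathEdgeEquiv m) e).val = a.val := by
  show ((Sym2.inf e.val).val) = a.val
  rw [he, Sym2.inf_mk, inf_eq_left.2 (le_of_lt (by omega : a < b))]

/-- the line graph of a path is a path -/
def linePathIso (m : ℕ) : lineG (pathGraph m) ≃g pathGraph (m - 1) where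
  toEquiv := pathEdgeEquiv m
  map_rel_iff' := by
    rintro e f
    obtain ⟨a, b, hab, hea⟩ := pathGraph_edge_iff e.2
    obtain ⟨c, d, hcd, hfc⟩ := pathGraph_edge_iff f.2
    rw [pathGraph_adj]
    rw [pathEdgeEquiv_val e a b hab hea, pathEdgeEquiv_val f c d hcd hfc]
    show _ ↔ (e ≠ f ∧ ∃ v, v ∈ e.val ∧ v ∈ f.val)
    constructor
    · rintro (h | h)
      · refine ⟨?_, b, by rw [hea]; simp, by rw [hfc]; simp [Sym2.mem_iff]; left; apply Fin.ext; omega⟩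
        intro hef
        rw [Subtype.ext_iff, hea, hfc, Sym2.eq_iff] at hef
        rcases hef with ⟨h1, h2⟩ | ⟨h1, h2⟩ <;>
          · have := congrArg Fin.val h1; have := congrArg Fin.val h2; omega
      · refine ⟨?_, a, by rw [hea]; simp, by rw [hfc]; simp [Sym2.mem_iff]; right; apply Fin.ext; omega⟩
        intro hef
        rw [Subtype.ext_iff, hea, hfc, Sym2.eq_iff] at hef
        rcases hef with ⟨h1, h2⟩ | ⟨h1, h2⟩ <;>
          · have := congrArg Fin.val h1; have := congrArg Fin.val h2; omega
    · rintro ⟨hne, v, hv, hw⟩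
      rw [hea, Sym2.mem_iff] at hv
      rw [hfc, Sym2.mem_iff] at hw
      have hne' : ¬ (a = c) := by
        intro h
        apply hne
        apply Subtype.ext
        rw [hea, hfc, h, Sym2.eq_iff]
        left
        exact ⟨rfl, Fin.ext (by omega)⟩
      rcases hv with rfl | rfl <;> rcases hw with h | h <;>
        first
          | (exact absurd h hne')
          | (have := congrArg Fin.val h; omega)
          | (exact absurd (Fin.ext (by have := congrArg Fin.val h; omega) : a = c) hne')

/-- the straight walk -/
def sWalk (m : ℕ) : ∀ (d : ℕ) (u v : Fin m), u.val + d = v.val → (pathGraph m).Walk u v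
  | 0, u, v, h => Walk.copy Walk.nil rfl (Fin.ext h)
  | d + 1, u, v, h =>
      Walk.cons (by rw [pathGraph_adj]; left; rfl :
          (pathGraph m).Adj u ⟨u.val + 1, by omega⟩)
        (sWalk m d ⟨u.val + 1, by omega⟩ v (by simp; omega))

lemma sWalk_support_ge (m : ℕ) : ∀ (d : ℕ) (u v : Fin m) (h : u.val + d = v.val)
    (x : Fin m), x ∈ (sWalk m d u v h).support → u.val ≤ x.val := by
  intro d
  induction d with
  | zero =>
      intro u v h x hx
      simp [sWalk] at hx
      subst hx
      omega
  | succ d ih =>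
      intro u v h x hx
      simp only [sWalk, Walk.support_cons, List.mem_cons] at hx
      rcases hx with rfl | hx
      · omega
      · have := ih ⟨u.val + 1, by omega⟩ v (by simp; omega) x hx
        simp at this
        omega

lemma sWalk_isPath (m : ℕ) : ∀ (d : ℕ) (u v : Fin m) (h : u.val + d = v.val),
    (sWalk m d u v h).IsPath := by
  intro d
  induction d with
  | zero => intro u v h; simp [sWalk]
  | succ d ih =>
      intro u v h
      rw [sWalk, Walk.cons_isPath_iff]
      refine ⟨ih _ _ _, fun hmem => ?_⟩
      have := sWalk_support_ge m d ⟨u.val + 1, by omega⟩ v (by simp; omega) u hmem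
      simp at this

lemma mem_support_of_between {m : ℕ} :
    ∀ {u v : Fin m} (p : (pathGraph m).Walk u v) (x : Fin m),
      u.val ≤ x.val → x.val ≤ v.val → x ∈ p.support := by
  intro u v p
  induction p with
  | nil =>
      intro x h1 h2
      have hx : x.val = _ := Nat.le_antisymm h2 h1
      have : x = _ := Fin.ext hx
      rw [this]
      exact Walk.start_mem_support _
  | @cons a w b hadj q ih =>
      intro x h1 h2
      rcases Nat.eq_or_lt_of_le h1 with heq | hlt
      · have : x = a := Fin.ext heq.symm
        rw [this]
        exact Walk.start_mem_support _
      · rw [Walk.support_cons, List.mem_cons]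
        right
        rw [pathGraph_adj] at hadj
        rcases hadj with hup | hdown
        · exact ih x (by omega) h2
        · exact ih x (by omega) h2

lemma path_edges_map {m : ℕ} (c : Sym2 (Fin m) → ℕ) (g : ℕ → ℕ)
    (hg : ∀ a b : Fin m, a.val + 1 = b.val → c s(a, b) = g a.val) :
    ∀ {u v : Fin m} (p : (pathGraph m).Walk u v), p.IsPath → u.val ≤ v.val →
      p.edges.map c = (List.range (v.val - u.val)).map (fun i => g (u.val + i)) := by
  intro u v p
  induction p with
  | nil =>
      intro _ _
      simp
  | @cons a w b hadj q ih =>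
      intro hp huv
      rw [Walk.cons_isPath_iff] at hp
      have hab : a.val < b.val := by
        rcases Nat.eq_or_lt_of_le huv with heq | hlt
        · exfalso
          have : a = b := Fin.ext heq
          subst this
          exact hp.2 (Walk.end_mem_support q)
        · exact hlt
      have hw : w.val = a.val + 1 := by
        rw [pathGraph_adj] at hadj
        rcases hadj with h | h
        · omega
        · exfalso
          exact hp.2 (mem_support_of_between q a (by omega) (by omega))
      have hwv : w.val ≤ b.val := by omega
      rw [Walk.edges_cons, List.map_cons, ih hp.1 hwv]
      have hrange : b.val - a.val = (b.val - w.val) + 1 := by omega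
      rw [hrange, List.range_succ_eq_map, List.map_cons, List.map_map]
      congr 1
      · exact hg a w hw.symm
      · apply List.map_congr_left
        intro i _
        simp only [Function.comp_apply]
        congr 1
        omega

def iterIso (n : ℕ) : ∀ k : ℕ, (iterLine (pathGraph n) k).2 ≃g pathGraph (n - k)
  | 0 => RelIso.refl _
  | (k+1) => (lineIso (iterIso n k)).trans (linePathIso (n - k))

local notation "ν" => padicValNat 2

lemma between_lemma {x y : ℕ} (hx : 0 < x) (hxy : x < y) (hv : ν x = ν y) :
    ∃ z, x < z ∧ z < y ∧ ν x < ν z := by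
  haveI : Fact (Nat.Prime 2) := ⟨Nat.prime_two⟩
  have hy : 0 < y := hx.trans hxy
  have hdx : 2 ^ ν x ∣ x := pow_padicValNat_dvd
  have hdy : 2 ^ ν x ∣ y := by rw [hv]; exact pow_padicValNat_dvd
  have hndx : ¬ 2 ^ (ν x + 1) ∣ x := pow_succ_padicValNat_not_dvd hx.ne'
  have hndy : ¬ 2 ^ (ν x + 1) ∣ y := by rw [hv]; exact pow_succ_padicValNat_not_dvd hy.ne'
  have hvx : ν x = ν x := rfl
  obtain ⟨a, ha'⟩ := hdx
  obtain ⟨b, hb'⟩ := hdy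
  have hpt : 0 < 2 ^ ν x := by positivity
  have hab : a < b := by
    have := hxy; rw [ha', hb'] at this
    exact lt_of_mul_lt_mul_left this (Nat.zero_le _)
  have ha : ¬ 2 ∣ a := fun ⟨c, hc⟩ => hndx ⟨c, by
    conv_lhs => rw [ha', hc]
    rw [pow_succ]; ring⟩
  have hb : ¬ 2 ∣ b := fun ⟨c, hc⟩ => hndy ⟨c, by
    conv_lhs => rw [hb', hc]
    rw [pow_succ]; ring⟩
  have hab1 : a + 1 < b := by omega
  refine ⟨2 ^ ν x * (a + 1), ?_, ?_, ?_⟩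
  · conv_lhs => rw [ha']
    exact mul_lt_mul_of_pos_left (by omega) hpt
  · conv_rhs => rw [hb']
    exact mul_lt_mul_of_pos_left hab1 hpt
  · have hdz : 2 ^ (ν x + 1) ∣ 2 ^ ν x * (a + 1) := by
      obtain ⟨c, hc⟩ : 2 ∣ a + 1 := by omega
      exact ⟨c, by rw [hc]; ring⟩
    have hz : 2 ^ ν x * (a + 1) ≠ 0 := by positivity
    have := (padicValNat_dvd_iff (ν x + 1) (2 ^ ν x * (a+1))).1 hdz
    omega

lemma count_map_range_eq_one_iff (f : ℕ → ℕ) (k co : ℕ) :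
    ((List.range k).map f).count co = 1 ↔
      ∃ i0, i0 < k ∧ f i0 = co ∧ ∀ i, i < k → f i = co → i = i0 := by
  induction k with
  | zero => simp
  | succ k ih =>
      rw [List.range_succ, List.map_append, List.count_append]
      simp only [List.map_cons, List.map_nil, List.count_cons, List.count_nil]
      by_cases hfk : f k = co
      · simp only [hfk, if_pos rfl, beq_self_eq_true, if_true]
        constructor
        · intro h
          have h0 : ((List.range k).map f).count co = 0 := by omega
          refine ⟨k, by omega, hfk, fun i hi hfi => ?_⟩
          rcases Nat.lt_or_ge i k with hik | hik
          · exfalso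
            have : co ∈ (List.range k).map f :=
              List.mem_map.2 ⟨i, List.mem_range.2 hik, hfi⟩
            rw [← List.count_pos_iff] at this
            omega
          · omega
        · rintro ⟨i0, hi0, hfi0, huniq⟩
          have hi0k : i0 = k := (huniq k (by omega) hfk).symm
          have : ((List.range k).map f).count co = 0 := by
            rw [List.count_eq_zero]
            rintro hmem
            obtain ⟨i, hi, hfi⟩ := List.mem_map.1 hmem
            rw [List.mem_range] at hi
            have := huniq i (by omega) hfi
            omega
          simp [this]
      · have : (if (f k == co) = true then 1 else 0) = 0 := by
          simp [hfk]
        rw [this, Nat.add_zero, ih]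
        constructor
        · rintro ⟨i0, hi0, hfi0, huniq⟩
          exact ⟨i0, by omega, hfi0, fun i hi hfi => huniq i (by
            rcases Nat.lt_or_ge i k with h | h
            · exact h
            · exfalso; have : i = k := by omega
              rw [this] at hfi; exact hfk hfi) hfi⟩
        · rintro ⟨i0, hi0, hfi0, huniq⟩
          have : i0 ≠ k := fun h => hfk (h ▸ hfi0)
          exact ⟨i0, by omega, hfi0, fun i hi hfi => huniq i (by omega) hfi⟩

lemma exists_unique_max (u v : ℕ) (h : u < v) :
    ∃ T i0, i0 < v - u ∧ ν (u + i0 + 1) = T ∧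
      ∀ i, i < v - u → ν (u + i + 1) = T → i = i0 := by
  have hne : (Finset.Icc (u + 1) v).Nonempty := ⟨u + 1, by simp; omega⟩
  obtain ⟨j0, hj0mem, hj0max⟩ := Finset.exists_max_image (Finset.Icc (u + 1) v) ν hne
  rw [Finset.mem_Icc] at hj0mem
  refine ⟨ν j0, j0 - u - 1, by omega, by
    congr 1; omega, ?_⟩
  intro i hi hvi
  have hj : u + i + 1 ∈ Finset.Icc (u + 1) v := Finset.mem_Icc.2 (by omega)
  set j := u + i + 1 with hjdef
  by_contra hne'
  have hjj0 : j ≠ j0 := by omega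
  rcases Nat.lt_or_ge j j0 with hlt | hge
  · obtain ⟨z, hz1, hz2, hz3⟩ := between_lemma (by omega : 0 < j) hlt (by rw [hvi])
    have : z ∈ Finset.Icc (u + 1) v := Finset.mem_Icc.2 (by rw [Finset.mem_Icc] at hj; omega)
    have := hj0max z this
    omega
  · have hlt : j0 < j := by omega
    obtain ⟨z, hz1, hz2, hz3⟩ := between_lemma (by omega : 0 < j0) hlt (by rw [hvi])
    have : z ∈ Finset.Icc (u + 1) v := Finset.mem_Icc.2 (by rw [Finset.mem_Icc] at hj; omega)
    have := hj0max z this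
    omega

lemma interval_bound : ∀ (s : ℕ) (S : Finset ℕ) (g : ℕ → ℕ) (a b : ℕ),
    S.card = s →
    (∀ u v, a ≤ u → u < v → v ≤ b →
      ∃ co ∈ S, ((List.range (v - u)).map (fun i => g (u + i))).count co = 1) →
    b - a ≤ 2 ^ s - 1 := by
  intro s
  induction s with
  | zero =>
      intro S g a b hcard hprop
      rcases Nat.lt_or_ge a b with h | h
      · obtain ⟨co, hco, -⟩ := hprop a b le_rfl h le_rfl
        rw [Finset.card_eq_zero.1 hcard] at hco
        simp at hco
      · omega
  | succ s ih =>
      intro S g a b hcard hprop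
      rcases Nat.lt_or_ge a b with h | h
      · obtain ⟨co, hco, hcount⟩ := hprop a b le_rfl h le_rfl
        obtain ⟨i0, hi0, hg0, huniq⟩ := (count_map_range_eq_one_iff _ _ _).1 hcount
        set j := a + i0 with hj
        have hjb : j < b := by omega
        -- left part
        have hleft : j - a ≤ 2 ^ s - 1 := by
          apply ih (S.erase co) g a j (by rw [Finset.card_erase_of_mem hco, hcard]; rfl)
          intro u v hu huv hv
          obtain ⟨co', hco', hcount'⟩ := hprop u v hu huv (by omega)
          refine ⟨co', Finset.mem_erase.2 ⟨?_, hco'⟩, hcount'⟩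
          rintro rfl
          obtain ⟨i, hi, hgi, -⟩ := (count_map_range_eq_one_iff _ _ _).1 hcount'
          have : u + i - a < b - a := by omega
          have he : g (a + (u + i - a)) = co' := by
            have : a + (u + i - a) = u + i := by omega
            rw [this]; exact hgi
          have := huniq (u + i - a) this he
          omega
        -- right part
        have hright : b - (j + 1) ≤ 2 ^ s - 1 := by
          apply ih (S.erase co) g (j + 1) b (by rw [Finset.card_erase_of_mem hco, hcard]; rfl)
          intro u v hu huv hv
          obtain ⟨co', hco', hcount'⟩ := hprop u v (by omega) huv hv
          refine ⟨co', Finset.mem_erase.2 ⟨?_, hco'⟩, hcount'⟩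
          rintro rfl
          obtain ⟨i, hi, hgi, -⟩ := (count_map_range_eq_one_iff _ _ _).1 hcount'
          have h1 : u + i - a < b - a := by omega
          have he : g (a + (u + i - a)) = co' := by
            have : a + (u + i - a) = u + i := by omega
            rw [this]; exact hgi
          have := huniq (u + i - a) h1 he
          omega
        have hpow : 2 ^ (s + 1) = 2 * 2 ^ s := by rw [pow_succ]; ring
        have hpos : 1 ≤ 2 ^ s := Nat.one_le_two_pow
        omega
      · calc b - a ≤ 0 := by omega
          _ ≤ _ := Nat.zero_le _

lemma val_count_one (u v : ℕ) (h : u < v) :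
    ∃ T, ((List.range (v - u)).map (fun i => ν (u + i + 1))).count T = 1 := by
  obtain ⟨T, i0, hi0, hg0, huniq⟩ := exists_unique_max u v h
  exact ⟨T, (count_map_range_eq_one_iff _ _ _).2 ⟨i0, hi0, hg0, huniq⟩⟩

lemma pathGraph_upper (m : ℕ) (hm : 2 ≤ m) :
    ∃ c : Sym2 (Fin m) → ℕ, (∀ e ∈ (pathGraph m).edgeSet, c e < Nat.clog 2 m) ∧
      IsCFCColoring (pathGraph m) c := by
  set g : ℕ → ℕ := fun x => ν (x + 1) with hgdef
  set c : Sym2 (Fin m) → ℕ := fun e => g (Sym2.inf e).val with hcdef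
  have hg : ∀ a b : Fin m, a.val + 1 = b.val → c s(a, b) = g a.val := by
    intro a b hab
    show g (Sym2.inf s(a, b)).val = g a.val
    rw [Sym2.inf_mk, inf_eq_left.2 (le_of_lt (by omega : a < b))]
  refine ⟨c, ?_, ?_⟩
  · intro e he
    obtain ⟨a, b, hab, rfl⟩ := pathGraph_edge_iff he
    rw [hg a b hab]
    have h1 : 2 ^ ν (a.val + 1) ≤ a.val + 1 :=
      Nat.le_of_dvd (by omega) pow_padicValNat_dvd
    have h2 : m ≤ 2 ^ Nat.clog 2 m := Nat.le_pow_clog one_lt_two m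
    have h3 : a.val + 1 < m := by omega
    have : 2 ^ ν (a.val + 1) < 2 ^ Nat.clog 2 m := by omega
    exact (Nat.pow_lt_pow_iff_right one_lt_two).1 this
  · intro u v huv
    rcases lt_trichotomy u.val v.val with hlt | heq | hgt
    · refine ⟨sWalk m (v.val - u.val) u v (by omega), sWalk_isPath _ _ _ _ _, ?_⟩
      rw [path_edges_map c g hg _ (sWalk_isPath _ _ _ _ _) (by omega)]
      exact val_count_one u.val v.val hlt
    · exact absurd (Fin.ext heq) huv
    · refine ⟨(sWalk m (u.val - v.val) v u (by omega)).reverse,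
        (sWalk_isPath _ _ _ _ _).reverse, ?_⟩
      rw [Walk.edges_reverse, List.map_reverse]
      obtain ⟨T, hT⟩ : ∃ T, (((sWalk m (u.val - v.val) v u (by omega)).edges.map c).count T) = 1 := by
        rw [path_edges_map c g hg _ (sWalk_isPath _ _ _ _ _) (by omega)]
        exact val_count_one v.val u.val hgt
      exact ⟨T, by rw [List.count_reverse]; exact hT⟩

lemma pathGraph_lower (m : ℕ) (hm : 2 ≤ m) (t : ℕ)
    (hmem : ∃ c : Sym2 (Fin m) → ℕ, (∀ e ∈ (pathGraph m).edgeSet, c e < t) ∧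
      IsCFCColoring (pathGraph m) c) : Nat.clog 2 m ≤ t := by
  obtain ⟨c, hc, hcfc⟩ := hmem
  set g : ℕ → ℕ := fun x => if h : x + 1 < m then c s(⟨x, by omega⟩, ⟨x + 1, h⟩) else 0
    with hgdef
  have hg : ∀ a b : Fin m, a.val + 1 = b.val → c s(a, b) = g a.val := by
    intro a b hab
    have h : a.val + 1 < m := by omega
    rw [hgdef]
    simp only [dif_pos h]
    congr 1
    rw [Sym2.eq_iff]
    left
    exact ⟨Fin.ext rfl, Fin.ext (by simp [← hab])⟩
  have hbound := interval_bound t (Finset.range t) g 0 (m - 1) (Finset.card_range t) ?prop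
  case prop =>
    intro u v hu huv hv
    have hvm : v < m := by omega
    have hum : u < m := by omega
    set U : Fin m := ⟨u, hum⟩
    set V : Fin m := ⟨v, hvm⟩
    have hUV : U ≠ V := fun h => by
      have := congrArg Fin.val h
      simp [U, V] at this
      omega
    obtain ⟨p, hp, color, hcount⟩ := hcfc U V hUV
    have hedges := path_edges_map c g hg p hp (by show u ≤ v; omega)
    refine ⟨color, ?_, ?_⟩
    · rw [Finset.mem_range]
      have hmemc : color ∈ p.edges.map c := by
        rw [← List.count_pos_iff]
        omega
      obtain ⟨e, hep, rfl⟩ := List.mem_map.1 hmemc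
      exact hc e (Walk.edges_subset_edgeSet p hep)
    · have : (U.val : ℕ) = u := rfl
      rw [← hedges]
      show (p.edges.map c).count color = 1
      exact hcount
  have h1 : 1 ≤ 2 ^ t := Nat.one_le_two_pow
  have hm2 : m ≤ 2 ^ t := by omega
  exact (Nat.clog_le_iff_le_pow one_lt_two).2 hm2

theorem cfcNum_pathGraph (m : ℕ) (hm : 2 ≤ m) :
    cfcNum (pathGraph m) = Nat.clog 2 m := by
  unfold cfcNum
  have hub := pathGraph_upper m hm
  apply le_antisymm
  · exact Nat.sInf_le hub
  · exact le_csInf ⟨_, hub⟩ (fun t ht => pathGraph_lower m hm t ht)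


/-- cfc(L^k(P_n)) = ⌈log₂(n - k)⌉ for k < n - 1. -/
theorem stmt_17 (n k : ℕ) (hn : 2 ≤ n) (hk : k < n - 1) :
    cfcNum (iterLine (SimpleGraph.pathGraph n) k).2 = Nat.clog 2 (n - k) := by
  rw [cfcNum_iso (iterIso n k)]
  exact cfcNum_pathGraph (n - k) (by omega)
end

section
/- Let G = K_n be the complete graph with n ≥ 4. Then cfc(G) = 1 and cfc(L^k(G)) = 2 for every positive integer k. -/
open SimpleGraph

universe u

section CFCAux
open List
variable {V : Type u} {G : SimpleGraph V}

lemma walk_of_chain : ∀ (P : List V) (u w : V), P.head? = some u → P.getLast? = some w →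
    P.Chain' G.Adj → ∃ p : G.Walk u w, p.support = P := by
  intro P
  induction P with
  | nil => intro u w h; simp at h
  | cons x t ih =>
    intro u w hh hl hc
    simp only [head?_cons, Option.some.injEq] at hh
    subst hh
    cases t with
    | nil =>
      simp only [getLast?_singleton, Option.some.injEq] at hl
      subst hl
      exact ⟨Walk.nil, rfl⟩
    | cons y t' =>
      simp only [List.Chain', List.isChain_cons_cons] at hc
      obtain ⟨p', hp'⟩ := ih y w (by simp) (by simpa using hl) hc.2
      exact ⟨Walk.cons hc.1 p', by simp [hp']⟩

lemma path_inner (l₁ m₁ m₂ : List V) (u w h0 z : V)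
    (hl : (l₁ ++ u :: (m₁ ++ w :: m₂)).Nodup)
    (hch : (l₁ ++ u :: (m₁ ++ w :: m₂)).Chain' G.Adj)
    (hh : (l₁ ++ u :: (m₁ ++ w :: m₂)).head? = some h0)
    (hz : (l₁ ++ u :: (m₁ ++ w :: m₂)).getLast? = some z)
    (hwrap : G.Adj h0 z) :
    ∃ p : G.Walk u w, p.IsPath ∧ s(h0, z) ∈ p.edges := by
  set A := l₁ ++ [u] with hA
  set B := w :: m₂ with hB
  have hsplit : l₁ ++ u :: (m₁ ++ w :: m₂) = A ++ (m₁ ++ B) := by simp [hA, hB]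
  rw [hsplit] at hl hch hh hz
  have hchA : A.Chain' G.Adj := (List.isChain_append.mp hch).1
  have hchB : B.Chain' G.Adj := (List.isChain_append.mp (List.isChain_append.mp hch).2.1).2.1
  -- W1 : Walk u h0 with support A.reverse
  obtain ⟨W1, hW1⟩ := walk_of_chain (G := G) A.reverse u h0
    (by simp [hA])
    (by rw [List.getLast?_reverse]
        rwa [List.head?_append_of_ne_nil _ (by simp [hA])] at hh)
    (by simp only [List.Chain']; rw [List.isChain_reverse]
        exact hchA.imp (fun a b hab => hab.symm))
  -- W2 : Walk z w with support B.reverse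
  obtain ⟨W2, hW2⟩ := walk_of_chain (G := G) B.reverse z w
    (by rw [List.head?_reverse]
        rw [List.getLast?_append_of_ne_nil _ (by simp [hB] : m₁ ++ B ≠ [])] at hz
        rwa [List.getLast?_append_of_ne_nil _ (by simp [hB] : B ≠ [])] at hz)
    (by simp [hB])
    (by simp only [List.Chain']; rw [List.isChain_reverse]
        exact hchB.imp (fun a b hab => hab.symm))
  refine ⟨W1.append (Walk.cons hwrap W2), ?_, ?_⟩
  · apply Walk.IsPath.mk'
    rw [Walk.support_append, hW1]
    have : (Walk.cons hwrap W2).support.tail = B.reverse := by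
      simp [Walk.support_cons, hW2]
    rw [this, ← List.reverse_append]
    rw [List.nodup_reverse]
    rw [List.nodup_append] at hl ⊢
    obtain ⟨hA1, hmB, hdis⟩ := hl
    rw [List.nodup_append] at hmB
    refine ⟨hmB.2.1, hA1, ?_⟩
    intro x hxB y hyA hxy
    exact hdis y hyA x (List.mem_append_right _ hxB) hxy.symm
  · simp [Walk.edges_append, Walk.edges_cons]

lemma path_through (l : List V) (hne : l ≠ []) (hnd : l.Nodup)
    (hch : (l ++ l.take 1).Chain' G.Adj) (u w : V) (hu : u ∈ l) (hw : w ∈ l) (huw : u ≠ w) :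
    ∃ p : G.Walk u w, p.IsPath ∧ s(l.head hne, l.getLast hne) ∈ p.edges := by
  set h0 := l.head hne with hh0
  set z := l.getLast hne with hzdef
  have hhead : l.head? = some h0 := by rw [hh0, List.head?_eq_head]
  have hlast : l.getLast? = some z := by rw [hzdef, List.getLast?_eq_getLast]
  have htake : l.take 1 = [h0] := by
    cases l with
    | nil => exact absurd rfl hne
    | cons a t => simp [hh0]
  have hchl : l.Chain' G.Adj := (List.isChain_append.mp hch).1
  have hwrap : G.Adj h0 z := by
    have := (List.isChain_append.mp hch).2.2
    rw [htake] at this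
    exact (this z hlast h0 (by simp)).symm
  obtain ⟨l₁, r, rfl⟩ := List.append_of_mem hu
  have hw' : w ∈ l₁ ∨ w ∈ r := by
    rcases List.mem_append.mp hw with h | h
    · exact Or.inl h
    · rcases List.mem_cons.mp h with h | h
      · exact absurd h.symm huw
      · exact Or.inr h
  rcases hw' with hwl | hwr
  · obtain ⟨p₁, q, rfl⟩ := List.append_of_mem hwl
    have hre : (p₁ ++ w :: q) ++ u :: r = p₁ ++ w :: (q ++ u :: r) := by simp
    rw [hre] at hnd hchl hhead hlast
    obtain ⟨p, hp, he⟩ := path_inner p₁ q r w u h0 z hnd hchl hhead hlast hwrap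
    exact ⟨p.reverse, hp.reverse, by rwa [Walk.edges_reverse, List.mem_reverse]⟩
  · obtain ⟨m₁, m₂, rfl⟩ := List.append_of_mem hwr
    exact path_inner l₁ m₁ m₂ u w h0 z hnd hchl hhead hlast hwrap

def HC4 (G : SimpleGraph V) : Prop :=
  ∃ l : List V, l ≠ [] ∧ l.Nodup ∧ (∀ v, v ∈ l) ∧
    List.Chain' G.Adj (l ++ l.take 1) ∧ 4 ≤ l.length

lemma hc4_cfc_two (h : HC4 G) :
    ∃ c : Sym2 V → ℕ, (∀ e ∈ G.edgeSet, c e < 2) ∧ IsCFCColoring G c := by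
  classical
  obtain ⟨l, hne, hnd, hcov, hch, hlen⟩ := h
  set estar := s(l.head hne, l.getLast hne) with hestar
  refine ⟨fun e => if e = estar then 1 else 0, fun e _ => by simp only []; split <;> omega, ?_⟩
  intro u v huv
  obtain ⟨p, hp, he⟩ := path_through l hne hnd hch u v (hcov u) (hcov v) huv
  refine ⟨p, hp, 1, ?_⟩
  have hnodup : p.edges.Nodup := hp.isTrail.edges_nodup
  have h1 : (p.edges.map fun e => if e = estar then 1 else 0).count 1
      = p.edges.countP (fun e => e == estar) := by
    rw [List.count_eq_countP, List.countP_map]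
    apply List.countP_congr
    intro e _
    by_cases h : e = estar <;> simp [h]
  rw [h1, ← List.count_eq_countP]
  exact List.count_eq_one_of_mem hnodup he

noncomputable def cdec (p : Prop) : Decidable p := Classical.propDecidable p

noncomputable def gblk (G : SimpleGraph V) (a z : V) : List V → List (Sym2 V)
  | [] => []
  | [v] => [s(v, a)]
  | v :: w :: rest =>
      (((w :: rest).filter
        (fun x => @decide (G.Adj v x ∧ x ≠ w ∧ s(v, x) ≠ s(a, z)) (cdec _))).map
        (fun x => s(v, x))) ++ (s(v, w) :: gblk G a z (w :: rest))

variable {a z : V}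

lemma gblk_shape : ∀ (M : List V) (e : Sym2 V), e ∈ gblk G a z M →
    (∃ zz, M.getLast? = some zz ∧ e = s(zz, a)) ∨ (∃ x ∈ M, ∃ y ∈ M, e = s(x, y)) := by
  intro M
  induction M with
  | nil => intro e he; simp [gblk] at he
  | cons v t ih =>
    intro e he
    cases t with
    | nil =>
      simp [gblk] at he
      exact Or.inl ⟨v, by simp, he⟩
    | cons w rest =>
      simp only [gblk, List.mem_append, List.mem_map, List.mem_filter, List.mem_cons] at he
      rcases he with ⟨x, ⟨hx, _⟩, rfl⟩ | he | he
      · exact Or.inr ⟨v, by simp, x, by simp [hx], rfl⟩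
      · exact Or.inr ⟨v, by simp, w, by simp, he⟩
      · rcases ih e he with ⟨zz, hzz, rfl⟩ | ⟨x, hx, y, hy, rfl⟩
        · exact Or.inl ⟨zz, by rw [List.getLast?_cons_cons]; exact hzz, rfl⟩
        · exact Or.inr ⟨x, by simp [List.mem_cons.mp hx], y, by simp [List.mem_cons.mp hy], rfl⟩

lemma gblk_special_mem : ∀ (M : List V), M.getLast? = some z → s(z, a) ∈ gblk G a z M := by
  intro M
  induction M with
  | nil => simp
  | cons v t ih =>
    intro hM
    cases t with
    | nil =>
      simp at hM
      subst hM
      simp [gblk]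
    | cons w rest =>
      rw [List.getLast?_cons_cons] at hM
      simp only [gblk, List.mem_append, List.mem_cons]
      exact Or.inr (Or.inr (ih hM))

lemma gblk_cover : ∀ (M : List V), M.getLast? = some z → ∀ x y, G.Adj x y → x ∈ M → y ∈ M →
    s(x, y) ∈ gblk G a z M := by
  intro M
  induction M with
  | nil => intro _ x y _ hx; simp at hx
  | cons v t ih =>
    intro hM x y hadj hx hy
    by_cases hsp : s(x, y) = s(a, z)
    · rw [hsp, Sym2.eq_swap]
      exact gblk_special_mem _ hM
    cases t with
    | nil =>
      simp at hx hy
      rw [hx, hy] at hadj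
      exact absurd hadj (G.loopless.irrefl v)
    | cons w rest =>
      rw [List.getLast?_cons_cons] at hM
      have key : ∀ y', G.Adj v y' → y' ∈ w :: rest → s(v, y') ≠ s(a, z) →
          s(v, y') ∈ gblk G a z (v :: w :: rest) := by
        intro y' hadj' hy' hsp'
        simp only [gblk, List.mem_append, List.mem_cons]
        by_cases hyw : y' = w
        · subst hyw; exact Or.inr (Or.inl rfl)
        · refine Or.inl ?_
          simp only [List.mem_map, List.mem_filter]
          exact ⟨y', ⟨hy', by simp [hadj', hyw, hsp']⟩, rfl⟩
      rcases List.mem_cons.mp hx with hxv | hx'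
      · rcases List.mem_cons.mp hy with hyv | hy'
        · rw [hxv, hyv] at hadj
          exact absurd hadj (G.loopless.irrefl v)
        · rw [hxv] at hadj hsp ⊢
          exact key y hadj hy' hsp
      · rcases List.mem_cons.mp hy with hyv | hy'
        · rw [hyv] at hadj hsp ⊢
          rw [Sym2.eq_swap]
          rw [Sym2.eq_swap] at hsp
          exact key x hadj.symm hx' hsp
        · simp only [gblk, List.mem_append, List.mem_cons]
          exact Or.inr (Or.inr (ih hM x y hadj hx' hy'))

lemma gblk_edge : ∀ (M : List V), M.Chain' G.Adj → M.getLast? = some z → G.Adj z a →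
    ∀ e ∈ gblk G a z M, e ∈ G.edgeSet := by
  intro M
  induction M with
  | nil => intro _ _ _ e he; simp [gblk] at he
  | cons v t ih =>
    intro hch hM hza e he
    cases t with
    | nil =>
      simp at hM
      simp [gblk] at he
      subst he
      rw [hM]
      exact hza
    | cons w rest =>
      rw [List.getLast?_cons_cons] at hM
      simp only [List.Chain', List.isChain_cons_cons] at hch
      simp only [gblk, List.mem_append, List.mem_map, List.mem_filter, List.mem_cons] at he
      rcases he with ⟨x, ⟨_, hx⟩, rfl⟩ | he | he
      · simp only [decide_eq_true_eq] at hx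
        exact hx.1
      · rw [he]; exact hch.1
      · exact ih hch.2 hM hza e he

lemma gblk_len : ∀ M : List V, M.length ≤ (gblk G a z M).length := by
  intro M
  induction M with
  | nil => simp
  | cons v t ih =>
    cases t with
    | nil => simp [gblk]
    | cons w rest =>
      have := ih
      simp only [gblk, List.length_append, List.length_cons, List.length_map] at *
      omega

lemma gblk_nodup : ∀ (M : List V), M.Nodup → a ∉ M.tail → M.getLast? = some z →
    (M.head? = some a → 3 ≤ M.length) → (gblk G a z M).Nodup := by
  intro M
  induction M with
  | nil => simp [gblk]
  | cons v t ih =>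
    intro hnd hat hM hha
    cases t with
    | nil => simp [gblk]
    | cons w rest =>
      rw [List.getLast?_cons_cons] at hM
      simp only [List.tail_cons] at hat
      have hvt : v ∉ w :: rest := (List.nodup_cons.mp hnd).1
      have hndt : (w :: rest).Nodup := (List.nodup_cons.mp hnd).2
      have hwa : w ≠ a := fun h => hat (by simp [h])
      have hzmem : z ∈ w :: rest := List.mem_of_mem_getLast? (by rw [hM]; rfl)
      -- the cycle edge is not the special edge
      have hcyc_ne : s(v, w) ≠ s(a, z) := by
        intro h
        rcases Sym2.eq_iff.mp h with ⟨hva, hwz⟩ | ⟨hvz, hwa'⟩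
        · -- v = a, w = z
          have h3 : 3 ≤ (v :: w :: rest).length := hha (by simp [hva])
          cases rest with
          | nil => simp at h3
          | cons r rest' =>
            rw [List.getLast?_cons_cons] at hM
            have : z ∈ r :: rest' := List.mem_of_mem_getLast? (by rw [hM]; rfl)
            rw [← hwz] at this
            exact (List.nodup_cons.mp hndt).1 this
        · exact hwa hwa'
      -- elements of the recursive part
      have hrec : ∀ e ∈ gblk G a z (w :: rest), e = s(z, a) ∨ v ∉ e := by
        intro e he
        rcases gblk_shape _ e he with ⟨zz, hzz, rfl⟩ | ⟨x, hx, y, hy, rfl⟩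
        · rw [hM] at hzz
          exact Or.inl (by rw [(Option.some.injEq _ _).mp hzz])
        · refine Or.inr ?_
          intro hv
          rcases Sym2.mem_iff.mp hv with rfl | rfl
          · exact hvt hx
          · exact hvt hy
      simp only [gblk]
      rw [List.nodup_append]
      refine ⟨?_, ?_, ?_⟩
      · apply List.Nodup.map_on
        · intro x hx y hy hxy
          rcases Sym2.eq_iff.mp hxy with ⟨_, h⟩ | ⟨h1, h2⟩
          · exact h
          · exact absurd (h2 ▸ (List.mem_filter.mp hx).1) hvt
        · exact hndt.filter _
      · rw [List.nodup_cons]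
        refine ⟨?_, ih hndt (fun h => hat (List.mem_cons_of_mem _ (by simpa using h))) hM
          (fun h => absurd (by simpa using h) hwa)⟩
        intro hmem
        rcases hrec _ hmem with h | h
        · exact hcyc_ne (by rw [h, Sym2.eq_swap])
        · exact h (Sym2.mem_mk_left v w)
      · intro e' he' b hmem hbeq
        subst hbeq
        simp only [List.mem_map, List.mem_filter, decide_eq_true_eq] at he'
        obtain ⟨x, ⟨hx, hadjx, hxw, hxs⟩, rfl⟩ := he'
        rcases List.mem_cons.mp hmem with hceq | hmem'
        · rcases Sym2.eq_iff.mp hceq with ⟨_, h2⟩ | ⟨h1, _⟩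
          · exact hxw h2
          · exact hvt (by rw [h1]; exact List.mem_cons_self)
        · rcases hrec _ hmem' with h | h
          · exact hxs (by rw [h, Sym2.eq_swap])
          · exact h (Sym2.mem_mk_left v x)

lemma cyc_ne_special {v w : V} {rest : List V} (hnd : (v :: w :: rest).Nodup)
    (hat : a ∉ w :: rest) (hM : (w :: rest).getLast? = some z)
    (hha : v = a → rest ≠ []) : s(v, w) ≠ s(a, z) := by
  intro h
  rcases Sym2.eq_iff.mp h with ⟨hva, hwz⟩ | ⟨hvz, hwa'⟩
  · obtain ⟨r, rest', rfl⟩ := List.exists_cons_of_ne_nil (hha hva)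
    rw [List.getLast?_cons_cons] at hM
    have : z ∈ r :: rest' := List.mem_of_mem_getLast? (by rw [hM]; rfl)
    rw [← hwz] at this
    exact (List.nodup_cons.mp (List.nodup_cons.mp hnd).2).1 this
  · exact hat (by rw [← hwa']; exact List.mem_cons_self)

lemma gblk_chain : ∀ (M : List V), M.Nodup → a ∉ M.tail → M.getLast? = some z →
    (M.head? = some a → 3 ≤ M.length) → M ≠ [] →
    (gblk G a z M) ≠ [] ∧
    List.Chain' (fun e f : Sym2 V => e ≠ f ∧ ∃ t, t ∈ e ∧ t ∈ f) (gblk G a z M) ∧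
    (∀ e ∈ (gblk G a z M).head?, (∀ vh ∈ M.head?, vh ∈ e) ∧ e ≠ s(a, z) ∨ M.length ≤ 1) ∧
    (gblk G a z M).getLast? = some (s(z, a)) := by
  intro M
  induction M with
  | nil => intro _ _ _ _ h; exact absurd rfl h
  | cons v t ih =>
    intro hnd hat hM hha _
    cases t with
    | nil =>
      simp only [List.getLast?_singleton, Option.some.injEq] at hM
      subst hM
      refine ⟨by simp [gblk], by simp [gblk, List.Chain'], ?_, by simp [gblk]⟩
      intro e he
      exact Or.inr (by simp)
    | cons w rest =>
      rw [List.getLast?_cons_cons] at hM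
      simp only [List.tail_cons] at hat
      have hvt : v ∉ w :: rest := (List.nodup_cons.mp hnd).1
      have hndt : (w :: rest).Nodup := (List.nodup_cons.mp hnd).2
      have hwa : w ≠ a := fun h => hat (by simp [h])
      have hcyc_ne : s(v, w) ≠ s(a, z) := by
        apply cyc_ne_special hnd hat hM
        intro hva
        have h3 := hha (by simp [hva])
        intro hrnil
        rw [hrnil] at h3
        simp at h3
      have hrec : ∀ e ∈ gblk G a z (w :: rest), e = s(z, a) ∨ v ∉ e := by
        intro e he
        rcases gblk_shape _ e he with ⟨zz, hzz, rfl⟩ | ⟨x, hx, y, hy, rfl⟩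
        · rw [hM] at hzz
          exact Or.inl (by rw [(Option.some.injEq _ _).mp hzz])
        · refine Or.inr ?_
          intro hv
          rcases Sym2.mem_iff.mp hv with rfl | rfl
          · exact hvt hx
          · exact hvt hy
      obtain ⟨hrne, hrch, hrhd, hrlast⟩ := ih hndt
        (fun h => hat (List.mem_cons_of_mem _ (by simpa using h))) hM
        (fun h => absurd (by simpa using h) hwa) (by simp)
      have hinj : ∀ x y : V, s(v, x) = s(v, y) → x = y := by
        intro x y h
        rcases Sym2.eq_iff.mp h with ⟨_, h2⟩ | ⟨h1, h2⟩
        · exact h2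
        · rw [h2, ← h1]
      -- cyc vs head of rec
      have hcychead : ∀ y ∈ (gblk G a z (w :: rest)).head?,
          (s(v, w) ≠ y ∧ ∃ t, t ∈ s(v, w) ∧ t ∈ y) := by
        intro y hy
        have hymem : y ∈ gblk G a z (w :: rest) := List.mem_of_mem_head? hy
        have hyw : w ∈ y := by
          rcases hrhd y hy with ⟨h1, _⟩ | hlen
          · exact h1 w (by simp)
          · -- length (w :: rest) ≤ 1 means rest = []
            cases rest with
            | nil =>
              simp only [gblk, List.head?_cons, Option.mem_def, Option.some.injEq] at hy
              rw [← hy]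
              exact Sym2.mem_mk_left _ _
            | cons r rest' => simp at hlen
        refine ⟨?_, w, Sym2.mem_mk_right _ _, hyw⟩
        intro h
        rcases hrec y hymem with h1 | h1
        · exact hcyc_ne (by rw [h, h1, Sym2.eq_swap])
        · exact h1 (by rw [← h]; exact Sym2.mem_mk_left _ _)
      simp only [gblk]
      set extraM := ((w :: rest).filter
        (fun x => @decide (G.Adj v x ∧ x ≠ w ∧ s(v, x) ≠ s(a, z)) (cdec _))).map
        (fun x => s(v, x)) with hextraM
      refine ⟨by simp, ?_, ?_, ?_⟩
      · simp only [List.Chain']; rw [List.isChain_append]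
        refine ⟨?_, ?_, ?_⟩
        · apply List.Pairwise.isChain
          rw [hextraM, List.pairwise_map]
          apply List.Pairwise.imp_of_mem ?_ (hndt.filter _)
          intro x y hx hy hxy
          exact ⟨fun h => hxy (hinj _ _ h), v, Sym2.mem_mk_left _ _, Sym2.mem_mk_left _ _⟩
        · rw [List.isChain_cons]
          exact ⟨hcychead, hrch⟩
        · intro x hx y hy
          have hxmem : x ∈ extraM := List.mem_of_mem_getLast? hx
          simp only [hextraM, List.mem_map, List.mem_filter, decide_eq_true_eq] at hxmem
          obtain ⟨x', ⟨_, _, hxw', _⟩, rfl⟩ := hxmem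
          simp only [List.head?_cons, Option.mem_def, Option.some.injEq] at hy
          refine ⟨?_, v, Sym2.mem_mk_left _ _, by rw [← hy]; exact Sym2.mem_mk_left _ _⟩
          rw [← hy]
          intro h
          exact hxw' (hinj _ _ h)
      · intro e he
        refine Or.inl ?_
        rcases hextracases : extraM with _ | ⟨e0, extra'⟩
        · rw [hextracases] at he
          simp only [List.nil_append, List.head?_cons, Option.mem_def, Option.some.injEq] at he
          subst he
          exact ⟨fun vh hvh => by simp only [List.head?_cons, Option.mem_def,
            Option.some.injEq] at hvh; rw [← hvh]; exact Sym2.mem_mk_left _ _, hcyc_ne⟩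
        · rw [hextracases] at he
          simp only [List.cons_append, List.head?_cons, Option.mem_def, Option.some.injEq] at he
          subst he
          have he0 : e0 ∈ extraM := by rw [hextracases]; exact List.mem_cons_self
          simp only [hextraM, List.mem_map, List.mem_filter, decide_eq_true_eq] at he0
          obtain ⟨x', ⟨_, _, _, hxs⟩, rfl⟩ := he0
          exact ⟨fun vh hvh => by simp only [List.head?_cons, Option.mem_def,
            Option.some.injEq] at hvh; rw [← hvh]; exact Sym2.mem_mk_left _ _, hxs⟩
      · rw [List.getLast?_append_of_ne_nil _ (by simp)]
        obtain ⟨r0, rec', hreceq⟩ := List.exists_cons_of_ne_nil hrne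
        rw [hreceq, List.getLast?_cons_cons, ← hreceq]
        exact hrlast

lemma chain'_pmap (L : List (Sym2 V)) (H : ∀ e ∈ L, e ∈ G.edgeSet)
    (hch : List.Chain' (fun e f : Sym2 V => e ≠ f ∧ ∃ t, t ∈ e ∧ t ∈ f) L) :
    List.Chain' (lineG G).Adj (L.pmap (fun e h => (⟨e, h⟩ : G.edgeSet)) H) := by
  induction L with
  | nil => simp [List.Chain']
  | cons e t ih =>
    cases t with
    | nil => simp [List.pmap, List.Chain']
    | cons f t' =>
      simp only [List.Chain', List.isChain_cons_cons] at hch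
      simp only [List.pmap]
      simp only [List.Chain']; rw [List.isChain_cons_cons]
      constructor
      · exact ⟨fun hh => hch.1.1 (by simpa [Subtype.ext_iff] using hh), hch.1.2⟩
      · have := ih (fun e he => H e (List.mem_cons_of_mem _ he)) hch.2
        simpa [List.pmap, List.Chain'] using this

lemma hc4_line (h : HC4 G) : HC4 (lineG G) := by
  classical
  obtain ⟨l, hne, hnd, hcov, hch, hlen⟩ := h
  set a := l.head hne with ha
  set z := l.getLast hne with hz
  have hha' : l.head? = some a := by rw [ha, List.head?_eq_head]
  have hlast : l.getLast? = some z := by rw [hz, List.getLast?_eq_getLast]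
  have htake : l.take 1 = [a] := by
    cases l with
    | nil => exact absurd rfl hne
    | cons x t => simp [ha]
  have hchl : l.Chain' G.Adj := (List.isChain_append.mp hch).1
  have hza : G.Adj z a := by
    have := (List.isChain_append.mp hch).2.2
    rw [htake] at this
    exact this z hlast a (by simp)
  have hat : a ∉ l.tail := by
    cases l with
    | nil => exact absurd rfl hne
    | cons x t =>
      have : a = x := by simpa using hha'.symm
      rw [this]
      exact (List.nodup_cons.mp hnd).1
  have h3 : l.head? = some a → 3 ≤ l.length := fun _ => by omega
  have hKedge := gblk_edge (G := G) (a := a) (z := z) l hchl hlast hza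
  have hKnd := gblk_nodup (G := G) (a := a) (z := z) l hnd hat hlast h3
  obtain ⟨hKne, hKch, hKhd, hKlast⟩ := gblk_chain (G := G) (a := a) (z := z) l hnd hat hlast h3 hne
  have hKlen : 4 ≤ (gblk G a z l).length := le_trans hlen (gblk_len l)
  have hKcov : ∀ e ∈ G.edgeSet, e ∈ gblk G a z l := by
    intro e he
    revert he
    induction e using Sym2.ind with
    | _ x y =>
      intro he
      exact gblk_cover l hlast x y ((SimpleGraph.mem_edgeSet G).mp he) (hcov x) (hcov y)
  obtain ⟨K, hKgen⟩ : ∃ K, gblk G a z l = K := ⟨_, rfl⟩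
  rw [hKgen] at hKedge hKnd hKne hKch hKhd hKlast hKlen hKcov
  cases K with
  | nil => exact absurd rfl hKne
  | cons e0 K' =>
    have he0 : (∀ vh ∈ l.head?, vh ∈ e0) ∧ e0 ≠ s(a, z) := by
      rcases hKhd e0 rfl with h | h
      · exact h
      · omega
    have hae0 : a ∈ e0 := he0.1 a hha'
    have hcyc : List.Chain' (fun e f : Sym2 V => e ≠ f ∧ ∃ t, t ∈ e ∧ t ∈ f)
        ((e0 :: K') ++ [e0]) := by
      simp only [List.Chain']; rw [List.isChain_append]
      refine ⟨hKch, by simp, ?_⟩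
      intro x hx y hy
      rw [hKlast] at hx
      simp only [Option.mem_def, Option.some.injEq] at hx hy
      subst hx
      rw [List.head?_cons, Option.some.injEq] at hy
      subst hy
      refine ⟨?_, a, Sym2.mem_mk_right _ _, hae0⟩
      intro hh
      exact he0.2 (by rw [← hh, Sym2.eq_swap])
    have hcycedge : ∀ e ∈ (e0 :: K') ++ [e0], e ∈ G.edgeSet := by
      intro e he
      rcases List.mem_append.mp he with he | he
      · exact hKedge e he
      · simp only [List.mem_singleton] at he
        rw [he]
        exact hKedge e0 (List.mem_cons_self)
    refine ⟨(e0 :: K').pmap (fun e h => (⟨e, h⟩ : G.edgeSet)) hKedge, ?_, ?_, ?_, ?_, ?_⟩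
    · simp [List.pmap]
    · exact hKnd.pmap (fun e he f hf hef => by simpa [Subtype.ext_iff] using hef)
    · rintro ⟨e, he⟩
      rw [List.mem_pmap]
      exact ⟨e, hKcov e he, rfl⟩
    · have hpm := chain'_pmap _ hcycedge hcyc
      simp only [List.pmap_append, List.pmap] at hpm ⊢
      simpa [List.pmap] using hpm
    · rw [List.length_pmap]
      omega

lemma hc4_top (n : ℕ) (hn : 4 ≤ n) : HC4 (⊤ : SimpleGraph (Fin n)) := by
  refine ⟨List.finRange n, by simp; omega, List.nodup_finRange n, List.mem_finRange, ?_, by simp; omega⟩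
  have hn0 : 0 < n := by omega
  have htake : (List.finRange n).take 1 = [(⟨0, hn0⟩ : Fin n)] := by
    obtain ⟨m, rfl⟩ : ∃ m, n = m + 1 := ⟨n - 1, by omega⟩
    rw [List.finRange_succ]
    rfl
  rw [htake]
  simp only [List.Chain']; rw [List.isChain_iff_getElem]
  intro i hi
  simp only [List.length_append, List.length_finRange, List.length_singleton] at hi
  have hlen : (List.finRange n ++ [(⟨0, hn0⟩ : Fin n)]).length = n + 1 := by simp
  simp only [SimpleGraph.top_adj]
  rcases lt_or_ge (i + 1) n with h | h
  · have h1 : (List.finRange n ++ [(⟨0, hn0⟩ : Fin n)]).get ⟨i, by omega⟩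
        = (⟨i, by omega⟩ : Fin n) := by
      rw [List.get_eq_getElem, List.getElem_append_left (by simp; omega)]
      simp
    have h2 : (List.finRange n ++ [(⟨0, hn0⟩ : Fin n)]).get ⟨i + 1, by omega⟩
        = (⟨i + 1, by omega⟩ : Fin n) := by
      rw [List.get_eq_getElem, List.getElem_append_left (by simp; omega)]
      simp
    simp only [List.get_eq_getElem] at h1 h2
    rw [h1, h2]
    intro hcon
    have hval : i = i + 1 := congrArg Fin.val hcon
    omega
  · -- i + 1 = n
    have hieq : i + 1 = n := by omega
    have h1 : (List.finRange n ++ [(⟨0, hn0⟩ : Fin n)]).get ⟨i, by omega⟩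
        = (⟨i, by omega⟩ : Fin n) := by
      rw [List.get_eq_getElem, List.getElem_append_left (by simp; omega)]
      simp
    have h2 : (List.finRange n ++ [(⟨0, hn0⟩ : Fin n)]).get ⟨i + 1, by omega⟩
        = (⟨0, hn0⟩ : Fin n) := by
      rw [List.get_eq_getElem]
      exact List.getElem_concat_length (by simp [hieq]) _
    simp only [List.get_eq_getElem] at h1 h2
    rw [h1, h2]
    intro hcon
    have hval : i = 0 := congrArg Fin.val hcon
    omega

lemma hc4_nonadj (h : HC4 G) : ∃ u v : G.edgeSet, u ≠ v ∧ ¬ (lineG G).Adj u v := by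
  obtain ⟨l, hne, hnd, hcov, hch, hlen⟩ := h
  obtain ⟨x1, l1, rfl⟩ := List.exists_cons_of_ne_nil hne
  obtain ⟨x2, l2, rfl⟩ := List.exists_cons_of_ne_nil (l := l1) (List.length_pos_iff.mp (by simp at hlen; omega))
  obtain ⟨x3, l3, rfl⟩ := List.exists_cons_of_ne_nil (l := l2) (List.length_pos_iff.mp (by simp at hlen; omega))
  obtain ⟨x4, l4, rfl⟩ := List.exists_cons_of_ne_nil (l := l3) (List.length_pos_iff.mp (by simp at hlen; omega))
  have hchl := (List.isChain_append.mp hch).1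
  rw [List.isChain_cons_cons] at hchl
  have h12 : G.Adj x1 x2 := hchl.1
  rw [List.isChain_cons_cons] at hchl
  have h23 : G.Adj x2 x3 := hchl.2.1
  rw [List.isChain_cons_cons] at hchl
  have h34 : G.Adj x3 x4 := hchl.2.2.1
  simp only [List.nodup_cons, List.mem_cons, not_or] at hnd
  obtain ⟨⟨h12', h13', h14', _⟩, ⟨h23', h24', _⟩, ⟨h34', _⟩, _⟩ := hnd
  refine ⟨⟨s(x1, x2), h12⟩, ⟨s(x3, x4), h34⟩, ?_, ?_⟩
  · intro hcon
    rw [Subtype.ext_iff] at hcon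
    rcases Sym2.eq_iff.mp hcon with ⟨h1, _⟩ | ⟨h1, _⟩
    · exact h13' h1
    · exact h14' h1
  · rintro ⟨_, t, ht1, ht2⟩
    simp only [Sym2.mem_iff] at ht1 ht2
    rcases ht1 with rfl | rfl <;> rcases ht2 with h | h
    · exact h13' h
    · exact h14' h
    · exact h23' h
    · exact h24' h

lemma hc4_edge (h : HC4 G) : ∃ e, e ∈ G.edgeSet := by
  obtain ⟨l, hne, hnd, hcov, hch, hlen⟩ := h
  obtain ⟨x1, l1, rfl⟩ := List.exists_cons_of_ne_nil hne
  obtain ⟨x2, l2, rfl⟩ := List.exists_cons_of_ne_nil (l := l1) (List.length_pos_iff.mp (by simp at hlen; omega))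
  have hchl := (List.isChain_append.mp hch).1
  rw [List.isChain_cons_cons] at hchl
  exact ⟨s(x1, x2), hchl.1⟩

lemma one_notin (u v : V) (hne : u ≠ v) (hnadj : ¬ G.Adj u v)
    (c : Sym2 V → ℕ) (hc : ∀ e ∈ G.edgeSet, c e < 1) (hcfc : IsCFCColoring G c) : False := by
  obtain ⟨p, hp, color, hcount⟩ := hcfc u v hne
  have hmap : p.edges.map c = List.replicate p.edges.length 0 := by
    rw [List.eq_replicate_iff]
    refine ⟨by simp, ?_⟩
    intro b hb
    rw [List.mem_map] at hb
    obtain ⟨e, he, rfl⟩ := hb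
    have := hc e (p.edges_subset_edgeSet he)
    omega
  rw [hmap, List.count_replicate] at hcount
  split at hcount
  · rw [p.length_edges] at hcount
    exact hnadj (Walk.adj_of_length_eq_one hcount)
  · omega

lemma cfc_eq_two (h2 : ∃ c : Sym2 V → ℕ, (∀ e ∈ G.edgeSet, c e < 2) ∧ IsCFCColoring G c)
    (hedge : ∃ e, e ∈ G.edgeSet) (hnadj : ∃ u v : V, u ≠ v ∧ ¬ G.Adj u v) :
    cfcNum G = 2 := by
  unfold cfcNum
  set S : Set ℕ := {m : ℕ | ∃ c : Sym2 V → ℕ,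
    (∀ e ∈ G.edgeSet, c e < m) ∧ IsCFCColoring G c} with hS
  have h2' : (2 : ℕ) ∈ S := h2
  refine le_antisymm (Nat.sInf_le h2') ?_
  by_contra hcon
  push_neg at hcon
  have hmem : sInf S ∈ S := Nat.sInf_mem ⟨2, h2'⟩
  obtain ⟨c, hc, hcfc⟩ := hmem
  have h01 : sInf S = 0 ∨ sInf S = 1 := by omega
  rcases h01 with h0 | h1
  · rw [h0] at hc
    obtain ⟨e, he⟩ := hedge
    exact absurd (hc e he) (by omega)
  · rw [h1] at hc
    obtain ⟨u, v, hne, hna⟩ := hnadj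
    exact one_notin u v hne hna c hc hcfc

lemma cfc_top_eq_one (n : ℕ) (hn : 4 ≤ n) : cfcNum (⊤ : SimpleGraph (Fin n)) = 1 := by
  unfold cfcNum
  set S : Set ℕ := {m : ℕ | ∃ c : Sym2 (Fin n) → ℕ,
    (∀ e ∈ (⊤ : SimpleGraph (Fin n)).edgeSet, c e < m) ∧
    IsCFCColoring (⊤ : SimpleGraph (Fin n)) c} with hS
  have h1 : (1 : ℕ) ∈ S := by
    refine ⟨fun _ => 0, fun _ _ => Nat.one_pos, ?_⟩
    intro u v huv
    refine ⟨Walk.cons (by simpa using huv) Walk.nil, ?_, 0, ?_⟩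
    · apply Walk.IsPath.mk'
      simp [huv]
    · simp
  refine le_antisymm (Nat.sInf_le h1) ?_
  by_contra hcon
  push_neg at hcon
  have hmem : sInf S ∈ S := Nat.sInf_mem ⟨1, h1⟩
  obtain ⟨c, hc, _⟩ := hmem
  have h0 : sInf S = 0 := by omega
  rw [h0] at hc
  have hedge : s((⟨0, by omega⟩ : Fin n), (⟨1, by omega⟩ : Fin n)) ∈
      (⊤ : SimpleGraph (Fin n)).edgeSet := by
    simp only [SimpleGraph.mem_edgeSet, SimpleGraph.top_adj]
    intro hcon'
    have hval : (0 : ℕ) = 1 := congrArg Fin.val hcon'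
    omega
  exact absurd (hc _ hedge) (by omega)

theorem stmt_18_aux (n : ℕ) (hn : 4 ≤ n) :
    cfcNum (⊤ : SimpleGraph (Fin n)) = 1 ∧
      ∀ k : ℕ, 1 ≤ k → cfcNum (iterLine (⊤ : SimpleGraph (Fin n)) k).2 = 2 := by
  have hhc : ∀ k, HC4 (iterLine (⊤ : SimpleGraph (Fin n)) k).2 := by
    intro k
    induction k with
    | zero => exact hc4_top n hn
    | succ k ih => exact hc4_line ih
  refine ⟨cfc_top_eq_one n hn, ?_⟩
  intro k hk
  obtain ⟨j, rfl⟩ : ∃ j, k = j + 1 := ⟨k - 1, by omega⟩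
  exact cfc_eq_two (hc4_cfc_two (hhc (j + 1))) (hc4_edge (hhc (j + 1))) (hc4_nonadj (hhc j))

end CFCAux

/-- cfc(K_n) = 1 and cfc(L^k(K_n)) = 2 for n ≥ 4 and k ≥ 1. -/
theorem stmt_18 (n : ℕ) (hn : 4 ≤ n) :
    cfcNum (⊤ : SimpleGraph (Fin n)) = 1 ∧
      ∀ k : ℕ, 1 ≤ k → cfcNum (iterLine (⊤ : SimpleGraph (Fin n)) k).2 = 2 :=
  stmt_18_aux n hn
end

section
/- Let G be the star K_{1,n−1} of order n ≥ 4. Then cfc(G) = n − 1 and cfc(L(G)) = 1; moreover, for every integer k ≥ 2, cfc(L^k(G)) = 1 if n = 4, and cfc(L^k(G)) = 2 if n ≥ 5. -/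
set_option maxHeartbeats 1000000


open SimpleGraph

universe u

namespace CFCAux

variable {V : Type u} {G : SimpleGraph V}

/-- Build a walk from a chain of adjacencies. -/
def mkW (G : SimpleGraph V) : (u v : V) → (mid : List V) →
    List.Chain' G.Adj (u :: (mid ++ [v])) → G.Walk u v
  | _, _, [], h => Walk.cons (List.isChain_pair.mp h) Walk.nil
  | _, v, x :: mid, h =>
      Walk.cons (List.isChain_cons_cons.mp h).1 (mkW G x v mid (List.isChain_cons_cons.mp h).2)

lemma mkW_support (u v : V) (mid : List V) (h) :
    (mkW G u v mid h).support = u :: (mid ++ [v]) := by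
  induction mid generalizing u with
  | nil => simp [mkW]
  | cons x mid ih => simp [mkW]; exact ih x _

lemma chain'_adj_rev {m : List V} (h : m.Chain' G.Adj) : m.reverse.Chain' G.Adj :=
  List.isChain_reverse.mpr (h.imp fun _ _ hab => hab.symm)

lemma exists_path_through_wrap {l : List V} (hnd : l.Nodup) (hch : l.Chain' G.Adj)
    {a b u v : V} (hlast : l.getLast? = some a) (hhead : l.head? = some b)
    (hab : G.Adj a b)
    (A B C : List V) (hdecomp : l = A ++ u :: (B ++ v :: C)) :
    ∃ p : G.Walk u v, p.IsPath ∧ s(a, b) ∈ p.edges := by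
  have hq : ∃ q : G.Walk u b, q.support = (A ++ [u]).reverse := by
    cases A with
    | nil =>
      rw [hdecomp] at hhead
      simp only [List.nil_append, List.head?_cons, Option.some.injEq] at hhead
      subst hhead
      exact ⟨Walk.nil, by simp⟩
    | cons a0 A' =>
      rw [hdecomp] at hhead
      simp only [List.cons_append, List.head?_cons, Option.some.injEq] at hhead
      subst hhead
      have h1 : l = (a0 :: A' ++ [u]) ++ (B ++ v :: C) := by simp [hdecomp]
      have hpre : List.Chain' G.Adj (a0 :: A' ++ [u]) := by
        rw [h1] at hch
        exact (List.isChain_append.mp hch).1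
      have hrev' := chain'_adj_rev hpre
      have e1 : (a0 :: A' ++ [u]).reverse = u :: (A'.reverse ++ [a0]) := by simp
      rw [e1] at hrev'
      refine ⟨mkW G u a0 A'.reverse hrev', ?_⟩
      rw [mkW_support]
      simp
  have hr : ∃ r : G.Walk a v, r.support = (v :: C).reverse := by
    rcases List.eq_nil_or_concat C with rfl | ⟨C', c0, rfl⟩
    · have h1 : l = (A ++ u :: B) ++ [v] := by simp [hdecomp]
      rw [h1, List.getLast?_concat] at hlast
      simp only [Option.some.injEq] at hlast
      subst hlast
      exact ⟨Walk.nil, by simp⟩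
    · have h1 : l = (A ++ u :: (B ++ v :: C')) ++ [c0] := by
        simp [hdecomp, List.concat_eq_append]
      rw [h1, List.getLast?_concat] at hlast
      simp only [Option.some.injEq] at hlast
      subst hlast
      have h2 : l = (A ++ u :: B) ++ (v :: (C' ++ [c0])) := by
        simp [hdecomp, List.concat_eq_append]
      have hsuf : List.Chain' G.Adj (v :: (C' ++ [c0])) := by
        rw [h2] at hch
        exact (List.isChain_append.mp hch).2.1
      have hrev' := chain'_adj_rev hsuf
      have e1 : (v :: (C' ++ [c0])).reverse = c0 :: (C'.reverse ++ [v]) := by simp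
      rw [e1] at hrev'
      refine ⟨mkW G c0 v C'.reverse hrev', ?_⟩
      rw [mkW_support]
      simp [List.concat_eq_append]
  obtain ⟨q, hqs⟩ := hq
  obtain ⟨r, hrs⟩ := hr
  refine ⟨q.append (Walk.cons hab.symm r), ?_, ?_⟩
  · apply Walk.IsPath.mk'
    rw [Walk.support_append, hqs]
    have htail : (Walk.cons hab.symm r).support.tail = r.support := by
      simp [Walk.support_cons]
    rw [htail, hrs]
    have heq : (A ++ [u]).reverse ++ (v :: C).reverse = ((v :: C) ++ (A ++ [u])).reverse := by
      simp [List.reverse_append]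
    rw [heq, List.nodup_reverse]
    have hperm : ((v :: C) ++ (A ++ [u])).Perm ((A ++ [u]) ++ (v :: C)) :=
      List.perm_append_comm
    rw [hperm.nodup_iff]
    have hsub : List.Sublist ((A ++ [u]) ++ (v :: C)) l := by
      rw [hdecomp]
      have : A ++ u :: (B ++ v :: C) = (A ++ [u]) ++ (B ++ (v :: C)) := by simp
      rw [this]
      exact (List.sublist_append_right B (v :: C)).append_left _
    exact hnd.sublist hsub
  · rw [Walk.edges_append, Walk.edges_cons]
    simp [Sym2.eq_swap]

/-- A Hamiltonian cycle given as a list. -/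
def HamCyc (G : SimpleGraph V) (l : List V) : Prop :=
  l.Nodup ∧ (∀ v, v ∈ l) ∧ 3 ≤ l.length ∧ l.Chain' G.Adj ∧
    ∀ a ∈ l.getLast?, ∀ b ∈ l.head?, G.Adj a b

lemma count_map_indicator {α : Type*} [DecidableEq α] (e : α) :
    ∀ (E : List α), E.Nodup → e ∈ E →
      (E.map (fun x => if x = e then 1 else 0)).count 1 = 1 := by
  intro E hnd he
  induction E with
  | nil => simp at he
  | cons a E ih =>
    by_cases hae : a = e
    · subst hae
      have : ∀ x ∈ E, (if x = a then 1 else 0) = 0 := by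
        intro x hx
        have : x ≠ a := fun h => (List.nodup_cons.mp hnd).1 (h ▸ hx)
        simp [this]
      simp only [List.map_cons, if_pos rfl, List.count_cons]
      rw [List.count_eq_zero.mpr]
      · simp
      · intro h1
        obtain ⟨x, hx, hx1⟩ := List.mem_map.mp h1
        rw [this x hx] at hx1; exact one_ne_zero hx1.symm
    · have he' : e ∈ E := by
        rcases List.mem_cons.mp he with h | h
        · exact absurd h.symm hae
        · exact h
      simp only [List.map_cons, if_neg hae, List.count_cons]
      rw [ih (List.nodup_cons.mp hnd).2 he']
      simp

lemma cfcNum_eq_one (h2 : ∃ u v : V, u ≠ v) (hc : ∀ u v : V, u ≠ v → G.Adj u v) :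
    cfcNum G = 1 := by
  have h1 : 1 ∈ {n : ℕ | ∃ c : Sym2 V → ℕ, (∀ e ∈ G.edgeSet, c e < n) ∧ IsCFCColoring G c} := by
    refine ⟨fun _ => 0, fun e _ => one_pos, ?_⟩
    intro u v huv
    refine ⟨Walk.cons (hc u v huv) Walk.nil, ?_, 0, ?_⟩
    · rw [Walk.isPath_def]; simp [huv]
    · simp
  have h0 : 0 ∉ {n : ℕ | ∃ c : Sym2 V → ℕ, (∀ e ∈ G.edgeSet, c e < n) ∧ IsCFCColoring G c} := by
    rintro ⟨c, hb, -⟩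
    obtain ⟨u, v, huv⟩ := h2
    exact Nat.not_lt_zero _ (hb s(u, v) ((G.mem_edgeSet).mpr (hc u v huv)))
  have hne : {n : ℕ | ∃ c : Sym2 V → ℕ, (∀ e ∈ G.edgeSet, c e < n) ∧ IsCFCColoring G c}.Nonempty := ⟨1, h1⟩
  have hle : cfcNum G ≤ 1 := Nat.sInf_le h1
  have hmem := Nat.sInf_mem hne
  have hne0 : cfcNum G ≠ 0 := fun h => h0 (h ▸ hmem)
  omega

lemma cfcNum_eq_two {l : List V} (hl : HamCyc G l)
    (hnc : ∃ u w : V, u ≠ w ∧ ¬G.Adj u w) : cfcNum G = 2 := by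
  classical
  obtain ⟨hnd, hcov, hlen, hch, hwrap⟩ := hl
  have hne : l ≠ [] := by intro h; simp [h] at hlen
  obtain ⟨b, hb⟩ : ∃ b, l.head? = some b := ⟨l.head hne, List.head?_eq_head hne⟩
  obtain ⟨a, ha⟩ : ∃ a, l.getLast? = some a :=
    ⟨l.getLast hne, List.getLast?_eq_getLast hne⟩
  have hab : G.Adj a b := hwrap a (by simp [ha]) b (by simp [hb])
  set S := {m : ℕ | ∃ c : Sym2 V → ℕ, (∀ e ∈ G.edgeSet, c e < m) ∧ IsCFCColoring G c} with hS
  have key : ∀ u v : V, u ≠ v → ∃ p : G.Walk u v, p.IsPath ∧ s(a, b) ∈ p.edges := by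
    intro u v huv
    obtain ⟨A, R, hAR⟩ := List.append_of_mem (hcov u)
    have hv : v ∈ A ∨ v ∈ R := by
      have hvl := hcov v
      rw [hAR] at hvl
      rcases List.mem_append.mp hvl with h | h
      · exact Or.inl h
      · rcases List.mem_cons.mp h with h | h
        · exact absurd h.symm huv
        · exact Or.inr h
    rcases hv with hvA | hvR
    · obtain ⟨A1, A2, hA⟩ := List.append_of_mem hvA
      have hdec : l = A1 ++ v :: (A2 ++ u :: R) := by simp [hAR, hA]
      obtain ⟨p, hp, he⟩ :=
        exists_path_through_wrap hnd hch ha hb hab A1 A2 R hdec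
      exact ⟨p.reverse, hp.reverse, by simpa using he⟩
    · obtain ⟨B, C, hR⟩ := List.append_of_mem hvR
      have hdec : l = A ++ u :: (B ++ v :: C) := by simp [hAR, hR]
      exact exists_path_through_wrap hnd hch ha hb hab A B C hdec
  have h2 : 2 ∈ S := by
    refine ⟨fun e => if e = s(a, b) then 1 else 0, fun e _ => by beta_reduce; split <;> omega, ?_⟩
    intro u v huv
    obtain ⟨p, hp, hmem⟩ := key u v huv
    exact ⟨p, hp, 1, count_map_indicator _ _ hp.edges_nodup hmem⟩
  have h0 : (0 : ℕ) ∉ S := by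
    rintro ⟨c, hbnd, -⟩
    exact Nat.not_lt_zero _ (hbnd s(a, b) hab)
  have h1 : (1 : ℕ) ∉ S := by
    rintro ⟨c, hbnd, hcfc⟩
    obtain ⟨u, w, huw, hnadj⟩ := hnc
    obtain ⟨p, hp, color, hcount⟩ := hcfc u w huw
    have hall : ∀ x ∈ p.edges.map c, x = 0 := by
      intro x hx
      obtain ⟨e, he, rfl⟩ := List.mem_map.mp hx
      have := hbnd e (p.edges_subset_edgeSet he)
      omega
    have hcolmem : color ∈ p.edges.map c := by
      by_contra hcm
      rw [List.count_eq_zero.mpr hcm] at hcount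
      omega
    have hc0 : color = 0 := hall _ hcolmem
    have hcl : (p.edges.map c).count color = (p.edges.map c).length := by
      apply List.count_eq_length.mpr
      intro x hx
      rw [hc0, hall x hx]
    have hlen1 : p.edges.length = 1 := by
      have := hcl.symm.trans hcount
      simpa using this
    cases p with
    | nil => exact huw rfl
    | cons h q =>
      cases q with
      | nil => exact hnadj h
      | cons h' q' => simp [Walk.edges_cons] at hlen1
  have hle : cfcNum G ≤ 2 := Nat.sInf_le h2
  have hmem := Nat.sInf_mem (⟨2, h2⟩ : S.Nonempty)
  have hne0 : cfcNum G ≠ 0 := fun h => h0 (h ▸ hmem)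
  have hne1 : cfcNum G ≠ 1 := fun h => h1 (h ▸ hmem)
  omega


lemma edge_rep (e : G.edgeSet) : ∃ x y : V, G.Adj x y ∧ (e : Sym2 V) = s(x, y) := by
  obtain ⟨⟨x, y⟩, hxy⟩ := Quot.exists_rep (e : Sym2 V)
  refine ⟨x, y, ?_, hxy.symm⟩
  have he := e.prop
  rw [← hxy] at he
  exact he

/-- The index-of-min-endpoint function. -/
noncomputable def jjF [DecidableEq V] (l : List V) : Sym2 V → ℕ :=
  Sym2.lift ⟨fun x y => min (l.idxOf x) (l.idxOf y), fun x y => min_comm _ _⟩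

@[simp] lemma jjF_mk [DecidableEq V] (l : List V) (x y : V) :
    jjF l s(x, y) = min (l.idxOf x) (l.idxOf y) := rfl

/-- Sorting key for edges along a Hamiltonian cycle. -/
noncomputable def keyF [DecidableEq V] (G : SimpleGraph V) (l : List V) (x0 aa : V)
    (e : G.edgeSet) : ℕ :=
  if (e : Sym2 V) = s(aa, x0) then 2 * l.length
  else 2 * jjF l (e : Sym2 V) +
    (if (e : Sym2 V) = s(l.getD (jjF l (e : Sym2 V)) x0, l.getD (jjF l (e : Sym2 V) + 1) x0)
      then 1 else 0)

lemma hamCyc_lineG {l : List V} (hl : HamCyc G l) :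
    ∃ E : List G.edgeSet, HamCyc (lineG G) E := by
  classical
  obtain ⟨hnd, hcov, hlen, hch, hwrap⟩ := hl
  have hne : l ≠ [] := by intro h; simp [h] at hlen
  set x0 := l.head hne with hx0def
  set aa := l.getLast hne with haadef
  set N := l.length with hN
  -- basic index facts
  have h_idx_lt : ∀ v : V, l.idxOf v < N := fun v => List.idxOf_lt_length_iff.mpr (hcov v)
  have h_get_idx : ∀ v : V, l[l.idxOf v]'(h_idx_lt v) = v := fun v => List.getElem_idxOf _
  have h_idx_get : ∀ (i : ℕ) (h : i < N), l.idxOf (l[i]'h) = i := fun i h =>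
    List.Nodup.idxOf_getElem hnd i h
  have hx0 : x0 = l[0]'(by omega) := List.head_eq_getElem_zero hne
  have haa : aa = l[N - 1]'(by omega) := List.getLast_eq_getElem hne
  -- edge anatomy
  have hanat : ∀ e : G.edgeSet, jjF l (e : Sym2 V) + 2 ≤ N ∧
      (l.getD (jjF l (e : Sym2 V)) x0) ∈ (e : Sym2 V) := by
    intro e
    obtain ⟨x, y, hadj, hxy⟩ := edge_rep e
    have hix := h_idx_lt x
    have hiy := h_idx_lt y
    have hixy : l.idxOf x ≠ l.idxOf y := by
      intro h
      apply hadj.ne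
      have hx := h_get_idx x
      have hy := h_get_idx y
      rw [← hx, ← hy]
      congr 1
    rw [hxy]
    rcases le_total (l.idxOf x) (l.idxOf y) with hle | hle
    · have hmin : min (l.idxOf x) (l.idxOf y) = l.idxOf x := min_eq_left hle
      constructor
      · simp only [jjF_mk, hmin]; omega
      · simp only [jjF_mk, hmin]
        rw [List.getD_eq_getElem l x0 hix, h_get_idx x]
        simp
    · have hmin : min (l.idxOf x) (l.idxOf y) = l.idxOf y := min_eq_right hle
      constructor
      · simp only [jjF_mk, hmin]; omega
      · simp only [jjF_mk, hmin]
        rw [List.getD_eq_getElem l x0 hiy, h_get_idx y]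
        simp
  -- cycle edges
  have hceadj : ∀ i : ℕ, i + 1 < N → G.Adj (l.getD i x0) (l.getD (i + 1) x0) := by
    intro i hi
    rw [List.getD_eq_getElem l x0 (by omega), List.getD_eq_getElem l x0 hi]
    have := List.isChain_iff_getElem.mp hch i (by omega)
    simpa [List.get_eq_getElem] using this
  have hwa : G.Adj aa x0 :=
    hwrap aa (by rw [List.getLast?_eq_getLast hne]; simp [haadef]) x0
      (by rw [List.head?_eq_head hne]; simp [hx0def])
  have hjj_ce : ∀ i : ℕ, i + 1 < N → jjF l s(l.getD i x0, l.getD (i + 1) x0) = i := by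
    intro i hi
    rw [List.getD_eq_getElem l x0 (by omega), List.getD_eq_getElem l x0 hi]
    simp only [jjF_mk]
    rw [h_idx_get i (by omega), h_idx_get (i + 1) hi]
    omega
  have hgetne : ∀ (i j : ℕ) (hi : i < N) (hj : j < N), i ≠ j → l[i]'hi ≠ l[j]'hj := by
    intro i j hi hj hij h
    exact hij ((List.Nodup.getElem_inj_iff hnd).mp h)
  have hce_ne_wrap : ∀ i : ℕ, i + 1 < N →
      s(l.getD i x0, l.getD (i + 1) x0) ≠ s(aa, x0) := by
    intro i hi h
    rw [List.getD_eq_getElem l x0 (by omega), List.getD_eq_getElem l x0 hi, haa, hx0] at h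
    rcases Sym2.eq_iff.mp h with ⟨h1, h2⟩ | ⟨h1, h2⟩
    · exact hgetne i (N - 1) (by omega) (by omega) (by omega) h1
    · have := (List.Nodup.getElem_inj_iff hnd).mp h1
      have := (List.Nodup.getElem_inj_iff hnd).mp h2
      omega
  have hkey_ce : ∀ (i : ℕ) (hi : i + 1 < N),
      keyF G l x0 aa ⟨s(l.getD i x0, l.getD (i + 1) x0), hceadj i hi⟩ = 2 * i + 1 := by
    intro i hi
    unfold keyF
    rw [if_neg (hce_ne_wrap i hi)]
    rw [hjj_ce i hi, if_pos rfl]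
  have hkey_wrap : ∀ e : G.edgeSet,
      keyF G l x0 aa e = 2 * N ↔ (e : Sym2 V) = s(aa, x0) := by
    intro e
    unfold keyF
    split
    · next h => simp [h, hN]
    · next h =>
      have := (hanat e).1
      constructor
      · intro hk; exfalso; split at hk <;> omega
      · intro hk; exact absurd hk h
  have hkey_le : ∀ e : G.edgeSet, keyF G l x0 aa e ≤ 2 * N := by
    intro e
    unfold keyF
    have := (hanat e).1
    split
    · omega
    · split <;> omega
  have hkey_cases : ∀ e : G.edgeSet, (e : Sym2 V) ≠ s(aa, x0) →
      keyF G l x0 aa e = 2 * jjF l (e : Sym2 V) ∨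
        (keyF G l x0 aa e = 2 * jjF l (e : Sym2 V) + 1 ∧
          (e : Sym2 V) = s(l.getD (jjF l (e : Sym2 V)) x0, l.getD (jjF l (e : Sym2 V) + 1) x0)) := by
    intro e he
    unfold keyF
    rw [if_neg he]
    split
    · next h => exact Or.inr ⟨rfl, h⟩
    · exact Or.inl (by omega)
  -- the list of all edges
  have hadjdec : DecidableRel G.Adj := fun _ _ => Classical.propDecidable _
  obtain ⟨allE, hallE, hallEnd⟩ : ∃ L : List G.edgeSet, (∀ e, e ∈ L) ∧ L.Nodup := by
    refine ⟨((l.flatMap fun x => l.map fun y => (x, y)).filterMap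
      (fun p => if h : G.Adj p.1 p.2 then some ⟨s(p.1, p.2), G.mem_edgeSet.mpr h⟩
        else none)).dedup, ?_, List.nodup_dedup _⟩
    intro e
    obtain ⟨x, y, hadj, hxy⟩ := edge_rep e
    rw [List.mem_dedup]
    rw [List.mem_filterMap]
    refine ⟨(x, y), ?_, ?_⟩
    · rw [List.mem_flatMap]
      exact ⟨x, hcov x, List.mem_map.mpr ⟨y, hcov y, rfl⟩⟩
    · rw [dif_pos hadj]
      congr 1
      exact Subtype.ext hxy.symm
  -- sort
  set r : G.edgeSet → G.edgeSet → Prop := fun e f => keyF G l x0 aa e ≤ keyF G l x0 aa f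
    with hrdef
  haveI : DecidableRel r := fun _ _ => Classical.propDecidable _
  haveI : IsTotal G.edgeSet r := ⟨fun e f => le_total _ _⟩
  haveI : IsTrans G.edgeSet r := ⟨fun _ _ _ h1 h2 => le_trans h1 h2⟩
  obtain ⟨E, hperm, hsort⟩ : ∃ E : List G.edgeSet, E.Perm allE ∧ E.Pairwise r :=
    ⟨List.insertionSort r allE, List.perm_insertionSort r allE,
      List.pairwise_insertionSort r allE⟩
  have hEnd : E.Nodup := hperm.nodup_iff.mpr hallEnd
  have hEcov : ∀ e : G.edgeSet, e ∈ E := fun e => hperm.mem_iff.mpr (hallE e)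
  have hmono : ∀ (s t : ℕ) (hs : s < E.length) (ht : t < E.length), s < t →
      keyF G l x0 aa (E[s]'hs) ≤ keyF G l x0 aa (E[t]'ht) := by
    intro s t hs ht hst
    have := hsort.rel_get_of_lt (a := ⟨s, hs⟩) (b := ⟨t, ht⟩) hst
    simpa [List.get_eq_getElem, r] using this
  have hH : ∀ (i : ℕ) (hi : i + 1 < E.length) (g : G.edgeSet),
      keyF G l x0 aa (E[i]'(by omega)) < keyF G l x0 aa g →
        keyF G l x0 aa (E[i+1]'hi) ≤ keyF G l x0 aa g := by
    intro i hi g hlt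
    obtain ⟨t, ht, hgt⟩ := List.mem_iff_getElem.mp (hEcov g)
    rcases lt_trichotomy t i with h | h | h
    · exact absurd (hgt ▸ hmono t i ht (by omega) h) (by omega)
    · subst h; rw [← hgt] at hlt; omega
    · rcases Nat.eq_or_lt_of_le h with h' | h'
      · rw [← hgt]
        have : i + 1 = t := h'
        subst this
        exact le_refl _
      · rw [← hgt]; exact hmono (i + 1) t hi ht h'
  -- the wrap edge and first cycle edge as elements
  let gw : G.edgeSet := ⟨s(aa, x0), hwa⟩
  let g0 : G.edgeSet := ⟨s(l.getD 0 x0, l.getD (0 + 1) x0), hceadj 0 (by omega)⟩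
  have hkgw : keyF G l x0 aa gw = 2 * N := (hkey_wrap gw).mpr rfl
  have hkg0 : keyF G l x0 aa g0 = 2 * 0 + 1 := hkey_ce 0 (by omega)
  -- length
  have hElen : 3 ≤ E.length := by
    let g1 : G.edgeSet := ⟨s(l.getD 1 x0, l.getD (1 + 1) x0), hceadj 1 (by omega)⟩
    have hkg1 : keyF G l x0 aa g1 = 2 * 1 + 1 := hkey_ce 1 (by omega)
    have h01 : g0 ≠ g1 := by intro h; rw [h, hkg1] at hkg0; omega
    have h0w : g0 ≠ gw := by intro h; rw [h, hkgw] at hkg0; omega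
    have h1w : g1 ≠ gw := by intro h; rw [h, hkgw] at hkg1; omega
    have hsub : List.Subperm [g0, g1, gw] E := by
      apply List.subperm_of_subset
      · simp [h01, h0w, h1w]
      · intro x hx
        simp only [List.mem_cons, List.not_mem_nil, or_false] at hx
        rcases hx with rfl | rfl | rfl <;> exact hEcov _
    simpa using hsub.length_le
  -- shared-vertex adjacency for consecutive elements
  have hchain : E.Chain' (lineG G).Adj := by
    refine List.isChain_iff_getElem.mpr ?_
    intro i hi
    have hi1 : i + 1 < E.length := by omega
    have hii : i < E.length := by omega
    have hne_ef : E[i]'hii ≠ E[i+1]'hi1 := by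
      intro h
      have := (List.Nodup.getElem_inj_iff hEnd).mp h
      omega
    refine ⟨hne_ef, ?_⟩
    have hgemono : keyF G l x0 aa (E[i]'hii) ≤ keyF G l x0 aa (E[i+1]'hi1) :=
      hmono i (i+1) hii hi1 (by omega)
    by_cases hw : ((E[i]'hii : G.edgeSet) : Sym2 V) = s(aa, x0)
    · exfalso
      have h1 : keyF G l x0 aa (E[i]'hii) = 2 * N := (hkey_wrap _).mpr hw
      have h2 : keyF G l x0 aa (E[i+1]'hi1) = 2 * N := by
        have := hkey_le (E[i+1]'hi1); omega
      have h3 := (hkey_wrap _).mp h2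
      exact hne_ef (Subtype.ext (hw.trans h3.symm))
    · set j := jjF l ((E[i]'hii : G.edgeSet) : Sym2 V) with hjdef
      have hjb : j + 2 ≤ N := (hanat _).1
      rcases hkey_cases _ hw with hk0 | ⟨hk1, hsym⟩
      · -- key even: anchor shared with next
        set g : G.edgeSet := ⟨s(l.getD j x0, l.getD (j+1) x0), hceadj j (by omega)⟩ with hgdef
        have hkg : keyF G l x0 aa g = 2 * j + 1 := hkey_ce j (by omega)
        have hf_le : keyF G l x0 aa (E[i+1]'hi1) ≤ 2 * j + 1 := by
          have := hH i hi1 g (by omega); omega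
        have hfnw : ((E[i+1]'hi1 : G.edgeSet) : Sym2 V) ≠ s(aa, x0) := by
          intro h
          have := (hkey_wrap _).mpr h
          omega
        have hjf : jjF l ((E[i+1]'hi1 : G.edgeSet) : Sym2 V) = j := by
          rcases hkey_cases _ hfnw with h | ⟨h, _⟩ <;> omega
        refine ⟨l.getD j x0, (hanat _).2, ?_⟩
        have := (hanat (E[i+1]'hi1)).2
        rwa [hjf] at this
      · -- E[i] is the cycle edge at j
        have hf_ge2 : 2 * j + 2 ≤ keyF G l x0 aa (E[i+1]'hi1) := by
          by_contra hcon
          push_neg at hcon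
          have hfeq : keyF G l x0 aa (E[i+1]'hi1) = 2 * j + 1 := by omega
          have hfnw : ((E[i+1]'hi1 : G.edgeSet) : Sym2 V) ≠ s(aa, x0) := by
            intro h
            have := (hkey_wrap _).mpr h
            omega
          rcases hkey_cases _ hfnw with h | ⟨h, hsymf⟩
          · omega
          · have hjf : jjF l ((E[i+1]'hi1 : G.edgeSet) : Sym2 V) = j := by omega
            rw [hjf] at hsymf
            exact hne_ef (Subtype.ext (hsym.trans hsymf.symm))
        by_cases hjN : j + 3 ≤ N
        · set g : G.edgeSet := ⟨s(l.getD (j+1) x0, l.getD (j+2) x0), hceadj (j+1) (by omega)⟩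
            with hgdef
          have hkg : keyF G l x0 aa g = 2 * (j+1) + 1 := hkey_ce (j+1) (by omega)
          have hf_le : keyF G l x0 aa (E[i+1]'hi1) ≤ 2 * j + 3 := by
            have := hH i hi1 g (by omega); omega
          have hfnw : ((E[i+1]'hi1 : G.edgeSet) : Sym2 V) ≠ s(aa, x0) := by
            intro h
            have := (hkey_wrap _).mpr h
            omega
          have hjf : jjF l ((E[i+1]'hi1 : G.edgeSet) : Sym2 V) = j + 1 := by
            rcases hkey_cases _ hfnw with h | ⟨h, _⟩ <;> omega
          refine ⟨l.getD (j+1) x0, ?_, ?_⟩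
          · rw [hsym]; simp [← hjdef]
          · have := (hanat (E[i+1]'hi1)).2
            rwa [hjf] at this
        · -- j = N - 2 : next must be the wrap edge
          have hj : j = N - 2 := by omega
          have hfw : ((E[i+1]'hi1 : G.edgeSet) : Sym2 V) = s(aa, x0) := by
            by_contra hcon
            rcases hkey_cases _ hcon with h | ⟨h, _⟩ <;>
              · have := (hanat (E[i+1]'hi1)).1; omega
          refine ⟨aa, ?_, ?_⟩
          · rw [hsym]
            have : l.getD (j + 1) x0 = aa := by
              rw [List.getD_eq_getElem l x0 (by omega), haa]
              congr 1
              omega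
            rw [this]
            simp
          · rw [hfw]; simp
  -- wrap adjacency of the sorted list
  have hEne : E ≠ [] := by intro h; rw [h] at hElen; simp at hElen
  have hklast : keyF G l x0 aa (E[E.length - 1]'(by omega)) = 2 * N := by
    obtain ⟨t, ht, hgt⟩ := List.mem_iff_getElem.mp (hEcov gw)
    have ht' : t ≤ E.length - 1 := by omega
    rcases Nat.eq_or_lt_of_le ht' with h | h
    · subst h
      exact (congrArg (keyF G l x0 aa) hgt).trans hkgw
    · have := hmono t (E.length - 1) ht (by omega) (by omega)
      rw [hgt, hkgw] at this
      have := hkey_le (E[E.length - 1]'(by omega))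
      omega
  have hkhead : keyF G l x0 aa (E[0]'(by omega)) ≤ 1 := by
    obtain ⟨t, ht, hgt⟩ := List.mem_iff_getElem.mp (hEcov g0)
    rcases Nat.eq_zero_or_pos t with h | h
    · subst h
      have := (congrArg (keyF G l x0 aa) hgt).trans hkg0
      omega
    · have := hmono 0 t (by omega) ht h
      rw [hgt, hkg0] at this
      omega
  have h0E : 0 < E.length := by omega
  have hlE : E.length - 1 < E.length := by omega
  have hlastw : ((E[E.length - 1]'hlE : G.edgeSet) : Sym2 V) = s(aa, x0) :=
    (hkey_wrap _).mp hklast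
  have hkhead' : keyF G l x0 aa (E[0]'h0E) ≤ 1 := hkhead
  have hheadnw : ((E[0]'h0E : G.edgeSet) : Sym2 V) ≠ s(aa, x0) := by
    intro h
    have := (hkey_wrap (E[0]'h0E)).mpr h
    omega
  have hjh : jjF l ((E[0]'h0E : G.edgeSet) : Sym2 V) = 0 := by
    rcases hkey_cases _ hheadnw with h | ⟨h, _⟩ <;> omega
  have hx0mem : x0 ∈ ((E[0]'h0E : G.edgeSet) : Sym2 V) := by
    have h1 := (hanat (E[0]'h0E)).2
    rw [hjh] at h1
    have h2 : l.getD 0 x0 = x0 := by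
      rw [List.getD_eq_getElem l x0 (by omega : (0:ℕ) < l.length)]
      exact hx0.symm
    rwa [h2] at h1
  refine ⟨E, hEnd, hEcov, hElen, hchain, ?_⟩
  intro p hp q hq
  rw [List.getLast?_eq_getLast hEne] at hp
  rw [List.head?_eq_head hEne] at hq
  simp only [Option.mem_def, Option.some.injEq] at hp hq
  have hplast : p = E[E.length - 1]'hlE := by rw [← hp]; exact List.getLast_eq_getElem hEne
  have hqhead : q = E[0]'h0E := by rw [← hq]; exact List.head_eq_getElem_zero hEne
  subst hplast hqhead
  refine ⟨?_, x0, ?_, hx0mem⟩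
  · intro h
    have h2 := congrArg (keyF G l x0 aa) h
    rw [hklast] at h2
    omega
  · rw [hlastw]
    simp


lemma two_neighbors {l : List V} (hl : HamCyc G l) (u : V) :
    ∃ x y : V, x ≠ y ∧ G.Adj u x ∧ G.Adj u y := by
  classical
  obtain ⟨hnd, hcov, hlen, hch, hwrap⟩ := hl
  have hne : l ≠ [] := by intro h; simp [h] at hlen
  have hchain : ∀ (i : ℕ) (h : i + 1 < l.length),
      G.Adj (l[i]'(by omega)) (l[i+1]'h) := by
    intro i h
    have := List.isChain_iff_getElem.mp hch i (by omega)
    simpa [List.get_eq_getElem] using this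
  have hchain2 : ∀ (i j : ℕ) (hj : j < l.length) (hji : j = i + 1),
      G.Adj (l[i]'(by omega)) (l[j]'hj) := by
    intro i j hj h
    subst h
    exact hchain i hj
  have hwa : G.Adj (l[l.length - 1]'(by omega)) (l[0]'(by omega)) := by
    have := hwrap (l.getLast hne) (by rw [List.getLast?_eq_getLast hne]; simp)
      (l.head hne) (by rw [List.head?_eq_head hne]; simp)
    rwa [List.getLast_eq_getElem hne, List.head_eq_getElem_zero hne] at this
  have hgetne : ∀ (i j : ℕ) (hi : i < l.length) (hj : j < l.length), i ≠ j →
      l[i]'hi ≠ l[j]'hj := by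
    intro i j hi hj hij h
    exact hij ((List.Nodup.getElem_inj_iff hnd).mp h)
  obtain ⟨i, hiu, rfl⟩ := List.mem_iff_getElem.mp (hcov u)
  rcases Nat.eq_zero_or_pos i with h0 | h0
  · subst h0
    exact ⟨l[1]'(by omega), l[l.length - 1]'(by omega),
      hgetne 1 (l.length - 1) (by omega) (by omega) (by omega),
      hchain 0 (by omega), hwa.symm⟩
  · rcases Nat.lt_or_ge i (l.length - 1) with h1 | h1
    · exact ⟨l[i - 1]'(by omega), l[i + 1]'(by omega),
        hgetne (i - 1) (i + 1) (by omega) (by omega) (by omega),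
        (hchain2 (i - 1) i hiu (by omega)).symm, hchain i (by omega)⟩
    · have hieq : i = l.length - 1 := by omega
      subst hieq
      exact ⟨l[l.length - 2]'(by omega), l[0]'(by omega),
        hgetne (l.length - 2) 0 (by omega) (by omega) (by omega),
        (hchain2 (l.length - 2) (l.length - 1) (by omega) (by omega)).symm, hwa⟩

lemma lineG_not_complete {l : List V} (hl : HamCyc G l)
    (hnc : ∃ u w : V, u ≠ w ∧ ¬G.Adj u w) :
    ∃ e f : G.edgeSet, e ≠ f ∧ ¬(lineG G).Adj e f := by
  obtain ⟨u, w, huw, hnadj⟩ := hnc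
  obtain ⟨x, y, hxy, hux, huy⟩ := two_neighbors hl u
  obtain ⟨z, _, _, hwz, _⟩ := two_neighbors hl w
  -- choose a neighbor x' of u with x' ≠ z
  obtain ⟨x', hux', hx'z⟩ : ∃ x' : V, G.Adj u x' ∧ x' ≠ z := by
    by_cases h : x = z
    · exact ⟨y, huy, fun hc => hxy (h ▸ hc ▸ rfl)⟩
    · exact ⟨x, hux, h⟩
  have hx'w : x' ≠ w := fun h => hnadj (h ▸ hux')
  have huz : u ≠ z := fun h => hnadj (h ▸ hwz).symm
  refine ⟨⟨s(u, x'), hux'⟩, ⟨s(w, z), hwz⟩, ?_, ?_⟩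
  · intro h
    have h2 : (s(u, x') : Sym2 V) = s(w, z) := congrArg Subtype.val h
    rcases Sym2.eq_iff.mp h2 with ⟨h3, h4⟩ | ⟨h3, h4⟩
    · exact huw h3
    · exact huz h3
  · rintro ⟨-, v, hv1, hv2⟩
    rw [Sym2.mem_iff] at hv1 hv2
    rcases hv1 with rfl | rfl
    · rcases hv2 with rfl | rfl
      · exact huw rfl
      · exact huz rfl
    · rcases hv2 with rfl | rfl
      · exact hx'w rfl
      · exact hx'z rfl

lemma hamCyc_of_complete (hcomp : ∀ u v : V, u ≠ v → G.Adj u v)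
    {l : List V} (hnd : l.Nodup) (hcov : ∀ v, v ∈ l) (hlen : 3 ≤ l.length) :
    HamCyc G l := by
  have hne : l ≠ [] := by intro h; simp [h] at hlen
  refine ⟨hnd, hcov, hlen, ?_, ?_⟩
  · exact List.Pairwise.isChain (List.Pairwise.imp (fun h => hcomp _ _ h) hnd)
  · intro p hp q hq
    rw [List.getLast?_eq_getLast hne] at hp
    rw [List.head?_eq_head hne] at hq
    simp only [Option.mem_def, Option.some.injEq] at hp hq
    apply hcomp
    rw [← hp, ← hq, List.getLast_eq_getElem hne, List.head_eq_getElem_zero hne]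
    intro h
    have := (List.Nodup.getElem_inj_iff hnd).mp h
    omega

lemma lineG_not_complete_of_four (hcomp : ∀ u v : V, u ≠ v → G.Adj u v)
    (a b c d : V) (hab : a ≠ b) (hac : a ≠ c) (had : a ≠ d) (hbc : b ≠ c)
    (hbd : b ≠ d) (hcd : c ≠ d) :
    ∃ e f : G.edgeSet, e ≠ f ∧ ¬(lineG G).Adj e f := by
  refine ⟨⟨s(a, b), hcomp a b hab⟩, ⟨s(c, d), hcomp c d hcd⟩, ?_, ?_⟩
  · intro h
    have h2 : (s(a, b) : Sym2 V) = s(c, d) := congrArg Subtype.val h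
    rcases Sym2.eq_iff.mp h2 with ⟨h3, h4⟩ | ⟨h3, h4⟩
    · exact hac h3
    · exact had h3
  · rintro ⟨-, v, hv1, hv2⟩
    rw [Sym2.mem_iff] at hv1 hv2
    rcases hv1 with rfl | rfl <;> rcases hv2 with rfl | rfl
    · exact hac rfl
    · exact had rfl
    · exact hbc rfl
    · exact hbd rfl

/-- A graph that is a triangle. -/
def Tri (G : SimpleGraph V) : Prop :=
  ∃ a b c : V, a ≠ b ∧ a ≠ c ∧ b ≠ c ∧ G.Adj a b ∧ G.Adj a c ∧ G.Adj b c ∧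
    ∀ v : V, v = a ∨ v = b ∨ v = c

lemma Tri.complete (h : Tri G) :
    (∃ u v : V, u ≠ v) ∧ ∀ u v : V, u ≠ v → G.Adj u v := by
  obtain ⟨a, b, c, hab, hac, hbc, h1, h2, h3, hall⟩ := h
  refine ⟨⟨a, b, hab⟩, ?_⟩
  intro u v huv
  rcases hall u with rfl | rfl | rfl <;> rcases hall v with rfl | rfl | rfl <;>
    first
      | exact absurd rfl huv
      | assumption
      | exact h1.symm
      | exact h2.symm
      | exact h3.symm

lemma Tri.lineG (h : Tri G) : Tri (lineG G) := by
  obtain ⟨a, b, c, hab, hac, hbc, h1, h2, h3, hall⟩ := h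
  refine ⟨⟨s(a, b), h1⟩, ⟨s(a, c), h2⟩, ⟨s(b, c), h3⟩, ?_, ?_, ?_, ?_, ?_, ?_, ?_⟩
  · intro h
    have h' : (s(a, b) : Sym2 V) = s(a, c) := congrArg Subtype.val h
    rcases Sym2.eq_iff.mp h' with ⟨-, h4⟩ | ⟨h4, -⟩
    · exact hbc h4
    · exact hac h4
  · intro h
    have h' : (s(a, b) : Sym2 V) = s(b, c) := congrArg Subtype.val h
    rcases Sym2.eq_iff.mp h' with ⟨h4, -⟩ | ⟨h4, -⟩
    · exact hab h4
    · exact hac h4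
  · intro h
    have h' : (s(a, c) : Sym2 V) = s(b, c) := congrArg Subtype.val h
    rcases Sym2.eq_iff.mp h' with ⟨h4, -⟩ | ⟨h4, -⟩
    · exact hab h4
    · exact hac h4
  · refine ⟨?_, a, by simp, by simp⟩
    intro h
    have h' : (s(a, b) : Sym2 V) = s(a, c) := congrArg Subtype.val h
    rcases Sym2.eq_iff.mp h' with ⟨-, h4⟩ | ⟨h4, -⟩
    · exact hbc h4
    · exact hac h4
  · refine ⟨?_, b, by simp, by simp⟩
    intro h
    have h' : (s(a, b) : Sym2 V) = s(b, c) := congrArg Subtype.val h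
    rcases Sym2.eq_iff.mp h' with ⟨h4, -⟩ | ⟨h4, -⟩
    · exact hab h4
    · exact hac h4
  · refine ⟨?_, c, by simp, by simp⟩
    intro h
    have h' : (s(a, c) : Sym2 V) = s(b, c) := congrArg Subtype.val h
    rcases Sym2.eq_iff.mp h' with ⟨h4, -⟩ | ⟨h4, -⟩
    · exact hab h4
    · exact hac h4
  · intro e
    obtain ⟨x, y, hadj, hxy⟩ := edge_rep e
    rcases hall x with rfl | rfl | rfl <;> rcases hall y with rfl | rfl | rfl <;>
      first
        | exact absurd rfl hadj.ne
        | exact Or.inl (Subtype.ext hxy)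
        | exact Or.inl (Subtype.ext (hxy.trans Sym2.eq_swap))
        | exact Or.inr (Or.inl (Subtype.ext hxy))
        | exact Or.inr (Or.inl (Subtype.ext (hxy.trans Sym2.eq_swap)))
        | exact Or.inr (Or.inr (Subtype.ext hxy))
        | exact Or.inr (Or.inr (Subtype.ext (hxy.trans Sym2.eq_swap)))

lemma Tri.cfcNum_eq_one (h : Tri G) : cfcNum G = 1 :=
  CFCAux.cfcNum_eq_one h.complete.1 h.complete.2

/-- The invariant for the `n ≥ 5` case. -/
def Good (G : SimpleGraph V) : Prop :=
  (∃ l : List V, HamCyc G l) ∧ ∃ u w : V, u ≠ w ∧ ¬G.Adj u w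

lemma Good.lineG (h : Good G) : Good (lineG G) := by
  obtain ⟨⟨l, hl⟩, hnc⟩ := h
  exact ⟨hamCyc_lineG hl, lineG_not_complete hl hnc⟩

lemma Good.cfcNum_eq_two (h : Good G) : cfcNum G = 2 := by
  obtain ⟨⟨l, hl⟩, hnc⟩ := h
  exact CFCAux.cfcNum_eq_two hl hnc


lemma star_edge {m : ℕ} (e : (completeBipartiteGraph (Fin 1) (Fin m)).edgeSet) :
    ∃ j : Fin m, (e : Sym2 (Fin 1 ⊕ Fin m)) = s(Sum.inl 0, Sum.inr j) := by
  obtain ⟨x, y, hadj, hxy⟩ := edge_rep e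
  cases x with
  | inl a =>
    cases y with
    | inl b => simp at hadj
    | inr j => exact ⟨j, by rw [hxy, Subsingleton.elim a 0]⟩
  | inr j =>
    cases y with
    | inl a => exact ⟨j, by rw [hxy, Sym2.eq_swap, Subsingleton.elim a 0]⟩
    | inr b => simp at hadj

lemma count_pair_ne_one (x col : ℕ) : List.count col [x, x] ≠ 1 := by
  by_cases h : x = col
  · subst h; simp
  · simp [List.count_cons, h]

lemma star_cfc {m : ℕ} (hm : 3 ≤ m) :
    cfcNum (completeBipartiteGraph (Fin 1) (Fin m)) = m := by
  classical
  set G := completeBipartiteGraph (Fin 1) (Fin m) with hGdef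
  have hadj : ∀ j : Fin m, G.Adj (Sum.inl 0) (Sum.inr j) := by intro j; simp [hGdef]
  have hadj' : ∀ (a : Fin 1) (j : Fin m), G.Adj (Sum.inl a) (Sum.inr j) := by
    intro a j; simp [hGdef]
  set S := {t : ℕ | ∃ c : Sym2 (Fin 1 ⊕ Fin m) → ℕ,
    (∀ e ∈ G.edgeSet, c e < t) ∧ IsCFCColoring G c} with hSdef
  -- the coloring
  set g : (Fin 1 ⊕ Fin m) → ℕ := Sum.elim (fun _ => 0) Fin.val with hgdef
  set c : Sym2 (Fin 1 ⊕ Fin m) → ℕ :=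
    Sym2.lift ⟨fun x y => g x + g y, fun x y => by dsimp only; omega⟩ with hcdef
  have hmemS : m ∈ S := by
    refine ⟨c, ?_, ?_⟩
    · intro e he
      obtain ⟨j, hj⟩ := star_edge (⟨e, he⟩ : G.edgeSet)
      simp only at hj
      rw [hj]
      simp [hcdef, hgdef]
    · intro u v huv
      by_cases hA : G.Adj u v
      · exact ⟨Walk.cons hA Walk.nil, by simp [Walk.isPath_def, hA.ne], c s(u, v), by simp⟩
      · -- u and v are both leaves
        cases u with
        | inl a =>
          cases v with
          | inl b => exact absurd (congrArg Sum.inl (Subsingleton.elim a b)) huv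
          | inr j => exact absurd (hadj' a j) hA
        | inr i =>
          cases v with
          | inl b => exact absurd (hadj' b i).symm hA
          | inr j =>
            have hij : i ≠ j := fun h => huv (congrArg Sum.inr h)
            have h1 : G.Adj (Sum.inr i) (Sum.inl 0) := (hadj i).symm
            refine ⟨Walk.cons h1 (Walk.cons (hadj j) Walk.nil), ?_, (i : ℕ), ?_⟩
            · simp [Walk.isPath_def, hij]
            · have hvij : ((i : ℕ) : ℕ) ≠ (j : ℕ) := fun h => hij (Fin.ext h)
              simp only [Walk.edges_cons, Walk.edges_nil, List.map_cons, List.map_nil]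
              have hc1 : c s(Sum.inr i, Sum.inl 0) = (i : ℕ) := by simp [hcdef, hgdef]
              have hc2 : c s(Sum.inl 0, Sum.inr j) = (j : ℕ) := by simp [hcdef, hgdef]
              rw [hc1, hc2]
              simp [List.count_cons, hvij.symm]
  have hlow : ∀ t ∈ S, m ≤ t := by
    rintro t ⟨cc, hbnd, hcfc⟩
    by_contra hlt
    push_neg at hlt
    have hbnd' : ∀ j : Fin m, cc s(Sum.inl 0, Sum.inr j) < t :=
      fun j => hbnd _ (G.mem_edgeSet.mpr (hadj j))
    rcases Nat.eq_zero_or_pos t with ht0 | ht0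
    · have := hbnd' ⟨0, by omega⟩
      omega
    · set f : Fin m → Fin t := fun j => ⟨cc s(Sum.inl 0, Sum.inr j), hbnd' j⟩ with hfdef
      obtain ⟨i, j, hij, hfeq⟩ := Fintype.exists_ne_map_eq_of_card_lt f (by simpa using hlt)
      have hceq : cc s(Sum.inl 0, Sum.inr i) = cc s(Sum.inl 0, Sum.inr j) :=
        congrArg Fin.val hfeq
      obtain ⟨p, hp, color, hcount⟩ := hcfc (Sum.inr i) (Sum.inr j)
        (fun h => hij (by injection h))
      -- analyze the path
      cases p with
      | nil => exact hij rfl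
      | cons h q =>
        rename_i w
        cases w with
        | inr b => exact absurd h (by simp [hGdef])
        | inl a =>
          have ha : a = 0 := Subsingleton.elim a 0
          subst ha
          cases q with
          | cons h' q' =>
            rename_i w2
            cases w2 with
            | inl b => exact absurd h' (by simp [hGdef])
            | inr b =>
              cases q' with
              | nil =>
                -- the unique 2-edge path; both edges get the same color
                have hcc1 : cc s(Sum.inr i, Sum.inl 0) = cc s(Sum.inl 0, Sum.inr j) := by
                  rw [Sym2.eq_swap]
                  exact hceq
                simp only [Walk.edges_cons, Walk.edges_nil, List.map_cons,
                  List.map_nil, hcc1] at hcount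
                exact count_pair_ne_one _ _ hcount
              | cons h'' q'' =>
                rename_i w3
                cases w3 with
                | inr d => exact absurd h'' (by simp [hGdef])
                | inl a2 =>
                  have ha2 : a2 = 0 := Subsingleton.elim a2 0
                  subst ha2
                  rw [Walk.isPath_def] at hp
                  simp only [Walk.support_cons] at hp
                  have hmem : (Sum.inl 0 : Fin 1 ⊕ Fin m) ∈ q''.support :=
                    q''.start_mem_support
                  rcases List.nodup_cons.mp hp with ⟨-, hp2⟩
                  rcases List.nodup_cons.mp hp2 with ⟨hna, -⟩
                  exact hna (List.mem_cons_of_mem _ hmem)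
  exact le_antisymm (Nat.sInf_le hmemS) (le_csInf ⟨m, hmemS⟩ hlow)

end CFCAux

open CFCAux in
/-- For the star K_{1,n-1} of order n ≥ 4: cfc(G) = n-1, cfc(L(G)) = 1, and for
k ≥ 2: cfc(L^k(G)) = 1 if n = 4 and cfc(L^k(G)) = 2 if n ≥ 5. -/
theorem stmt_19 (n : ℕ) (hn : 4 ≤ n) :
    cfcNum (completeBipartiteGraph (Fin 1) (Fin (n - 1))) = n - 1 ∧
      cfcNum (iterLine (completeBipartiteGraph (Fin 1) (Fin (n - 1))) 1).2 = 1 ∧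
      ∀ k : ℕ, 2 ≤ k →
        (n = 4 → cfcNum (iterLine (completeBipartiteGraph (Fin 1) (Fin (n - 1))) k).2 = 1) ∧
        (5 ≤ n → cfcNum (iterLine (completeBipartiteGraph (Fin 1) (Fin (n - 1))) k).2 = 2) := by
  classical
  have hm3 : 3 ≤ n - 1 := by omega
  set G := completeBipartiteGraph (Fin 1) (Fin (n - 1)) with hGdef
  have hadj : ∀ j : Fin (n - 1), G.Adj (Sum.inl 0) (Sum.inr j) := by intro j; simp [hGdef]
  set ej : Fin (n - 1) → G.edgeSet :=
    fun j => ⟨s(Sum.inl 0, Sum.inr j), G.mem_edgeSet.mpr (hadj j)⟩ with hejdef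
  have hej_inj : Function.Injective ej := by
    intro i j h
    have h2 : (s(Sum.inl 0, Sum.inr i) : Sym2 (Fin 1 ⊕ Fin (n - 1)))
        = s(Sum.inl 0, Sum.inr j) := congrArg Subtype.val h
    rcases Sym2.eq_iff.mp h2 with ⟨-, h3⟩ | ⟨h3, -⟩
    · injection h3
    · exact absurd h3 (by simp)
  have hcov : ∀ e : G.edgeSet, ∃ j, e = ej j := by
    intro e
    obtain ⟨j, hj⟩ := star_edge e
    exact ⟨j, Subtype.ext hj⟩
  have hcomp1 : ∀ u v : G.edgeSet, u ≠ v → (lineG G).Adj u v := by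
    intro u v huv
    refine ⟨huv, Sum.inl 0, ?_, ?_⟩
    · obtain ⟨j, hj⟩ := star_edge u; rw [hj]; simp
    · obtain ⟨j, hj⟩ := star_edge v; rw [hj]; simp
  have hne_ej : ∀ (i j : Fin (n - 1)), (i : ℕ) ≠ (j : ℕ) → ej i ≠ ej j := by
    intro i j hij h
    exact hij (congrArg Fin.val (hej_inj h))
  have hG1two : ∃ u v : G.edgeSet, u ≠ v :=
    ⟨ej ⟨0, by omega⟩, ej ⟨1, by omega⟩, hne_ej _ _ (by simp)⟩
  refine ⟨star_cfc hm3, cfcNum_eq_one hG1two hcomp1, ?_⟩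
  intro k hk
  constructor
  · -- n = 4
    intro h4
    subst h4
    have hTri1 : Tri (lineG G) := by
      refine ⟨ej ⟨0, by omega⟩, ej ⟨1, by omega⟩, ej ⟨2, by omega⟩,
        hne_ej _ _ (by simp), hne_ej _ _ (by simp), hne_ej _ _ (by simp),
        hcomp1 _ _ (hne_ej _ _ (by simp)), hcomp1 _ _ (hne_ej _ _ (by simp)),
        hcomp1 _ _ (hne_ej _ _ (by simp)), ?_⟩
      intro v
      obtain ⟨j, rfl⟩ := hcov v
      rcases j with ⟨jv, hjv⟩
      have : jv = 0 ∨ jv = 1 ∨ jv = 2 := by omega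
      rcases this with rfl | rfl | rfl
      · exact Or.inl rfl
      · exact Or.inr (Or.inl rfl)
      · exact Or.inr (Or.inr rfl)
    have hTrik : ∀ j : ℕ, 1 ≤ j → Tri (iterLine G j).2 := by
      intro j hj
      induction j, hj using Nat.le_induction with
      | base => exact hTri1
      | succ j hj ih => exact ih.lineG
    exact (hTrik k (by omega)).cfcNum_eq_one
  · -- 5 ≤ n
    intro h5
    have hm4 : 4 ≤ n - 1 := by omega
    have hLnd : ((List.finRange (n - 1)).map ej).Nodup :=
      List.Nodup.map hej_inj (List.nodup_finRange _)
    have hLcov : ∀ e : G.edgeSet, e ∈ (List.finRange (n - 1)).map ej := by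
      intro e
      obtain ⟨j, rfl⟩ := hcov e
      exact List.mem_map.mpr ⟨j, List.mem_finRange j, rfl⟩
    have hLlen : 3 ≤ ((List.finRange (n - 1)).map ej).length := by
      simp; omega
    have hHam1 : HamCyc (lineG G) ((List.finRange (n - 1)).map ej) :=
      hamCyc_of_complete hcomp1 hLnd hLcov hLlen
    have hGood2 : Good (iterLine G 2).2 := by
      constructor
      · exact hamCyc_lineG hHam1
      · exact lineG_not_complete_of_four hcomp1
          (ej ⟨0, by omega⟩) (ej ⟨1, by omega⟩) (ej ⟨2, by omega⟩) (ej ⟨3, by omega⟩)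
          (hne_ej _ _ (by simp)) (hne_ej _ _ (by simp)) (hne_ej _ _ (by simp))
          (hne_ej _ _ (by simp)) (hne_ej _ _ (by simp)) (hne_ej _ _ (by simp))
    have hGoodk : ∀ j : ℕ, 2 ≤ j → Good (iterLine G j).2 := by
      intro j hj
      induction j, hj using Nat.le_induction with
      | base => exact hGood2
      | succ j hj ih => exact ih.lineG
    exact (hGoodk k hk).cfcNum_eq_two
end
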